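/- arXiv:1909.10668 — 8 statements merged into one kernel-verified Lean document; each statement's English description precedes it below -/
import Mathlib

section
/- There is an absolute constant C > 0 such that for all integers n ≥ 2 and k ≥ 1, there exist an integer s with s ≤ C·(1 + min{n, n·log(2k+1)/log n}) and query vectors x₁,…,x_s ∈ {−k,−k+1,…,k−1,k}^n ⊆ ℤ^n such that the map y ↦ (‖y−x₁‖₂, …, ‖y−x_s‖₂) is injective on {−k,−k+1,…,k−1,k}^n. (That is, s nonadaptive ℓ₂ distance queries suffice to determine any hidden vector y exactly.) -/
open Finset

/-- central binomial squared bound -/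
lemma centralBinom_sq_le (t : ℕ) : (Nat.centralBinom t)^2 * (2*t+1) ≤ 16^t := by
  induction t with
  | zero => simp [Nat.centralBinom]
  | succ t ih =>
    have key := Nat.succ_mul_centralBinom_succ t
    -- (t+1) * cB(t+1) = 2*(2t+1)*cB t
    have h1 : ((t:ℕ)+1)^2 * ((Nat.centralBinom (t+1))^2 * (2*(t+1)+1))
        = 4*(2*t+1)*(2*t+3) * ((Nat.centralBinom t)^2 * (2*t+1)) := by
      have : ((t+1) * Nat.centralBinom (t+1))^2 = (2*(2*t+1)*Nat.centralBinom t)^2 := by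
        rw [key]
      ring_nf
      ring_nf at this
      nlinarith [this]
    have h2 : 4*(2*t+1)*(2*t+3) * ((Nat.centralBinom t)^2 * (2*t+1))
        ≤ 4*(2*t+1)*(2*t+3) * 16^t := by
      exact Nat.mul_le_mul_left _ ih
    have h3 : 4*(2*t+1)*(2*t+3) ≤ (2*t+2)^2 * 4 := by nlinarith
    have h4 : ((t:ℕ)+1)^2 * ((Nat.centralBinom (t+1))^2 * (2*(t+1)+1)) ≤ (t+1)^2 * 16^(t+1) := by
      calc ((t:ℕ)+1)^2 * ((Nat.centralBinom (t+1))^2 * (2*(t+1)+1))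
          = 4*(2*t+1)*(2*t+3) * ((Nat.centralBinom t)^2 * (2*t+1)) := h1
        _ ≤ 4*(2*t+1)*(2*t+3) * 16^t := h2
        _ ≤ ((2*t+2)^2 * 4) * 16^t := Nat.mul_le_mul_right _ h3
        _ = (t+1)^2 * 16^(t+1) := by ring
    have hpos : 0 < ((t:ℕ)+1)^2 := by positivity
    exact Nat.le_of_mul_le_mul_left h4 hpos

lemma choose_half_sq_le (m : ℕ) : (m.choose (m/2))^2 * (m+1) ≤ 4^m := by
  rcases Nat.even_or_odd m with ⟨t, ht⟩ | ⟨t, ht⟩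
  · subst ht
    have : t + t = 2*t := by ring
    rw [this]
    have h : (2*t)/2 = t := by omega
    rw [h]
    have := centralBinom_sq_le t
    have h16 : (16:ℕ)^t = 4^(2*t) := by rw [pow_mul]; norm_num
    calc ((2*t).choose t)^2 * (2*t+1) = (Nat.centralBinom t)^2 * (2*t+1) := by
          rw [Nat.centralBinom]
      _ ≤ 16^t := this
      _ = 4^(2*t) := h16
  · subst ht
    have h : (2*t+1)/2 = t := by omega
    rw [h]
    -- (2t+1).choose t = centralBinom (t+1) / 2 ;  2 * (2t+1).choose t = cB (t+1)
    have hdb : 2 * ((2*t+1).choose t) = Nat.centralBinom (t+1) := by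
      have hsymm : (2*t+1).choose (t+1) = (2*t+1).choose t := by
        rw [← Nat.choose_symm (by omega : t+1 ≤ 2*t+1)]
        congr 1; omega
      have : Nat.centralBinom (t+1) = (2*t+1).choose t + (2*t+1).choose (t+1) := by
        rw [Nat.centralBinom]
        have h2 : 2*(t+1) = (2*t+1)+1 := by ring
        have h2 : 2*(t+1) = (2*t+1)+1 := by ring
        rw [h2, Nat.choose_succ_succ]
      omega
    have hc := centralBinom_sq_le (t+1)
    -- (2*(2t+1).choose t)^2 * (2t+3) ≤ 16^(t+1)
    have hsq : (2 * ((2*t+1).choose t))^2 * (2*(t+1)+1) ≤ 16^(t+1) := by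
      rw [hdb]; exact hc
    have h16 : (16:ℕ)^(t+1) = 4 * 4^(2*t+1) := by
      rw [show (16:ℕ) = 4^2 by norm_num, ← pow_mul]
      rw [show 2*(t+1) = (2*t+1)+1 by ring, pow_succ]
      ring
    nlinarith [hsq, Nat.zero_le (((2*t+1).choose t)^2)]

open Finset

lemma count_bad {n : ℕ} (z : Fin n → ℤ) (t : ℤ) :
    ((univ : Finset (Fin n → Bool)).filter
        (fun x => (∑ i, (if x i then z i else 0)) = t)).card
      ≤ ((univ.filter (fun i => z i ≠ 0)).card.choose
          ((univ.filter (fun i => z i ≠ 0)).card / 2))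
        * 2 ^ (n - (univ.filter (fun i => z i ≠ 0)).card) := by
  classical
  set S := univ.filter (fun i : Fin n => z i ≠ 0) with hSdef
  set m := S.card with hm
  set F := ((univ : Finset (Fin n → Bool)).filter
      (fun x => (∑ i, (if x i then z i else 0)) = t)) with hF
  set c : ℤ := ∑ i ∈ S.filter (fun i => z i < 0), z i with hc
  set Φ : (Fin n → Bool) → Finset (Fin n) :=
    fun x => S.filter (fun i => (x i = true) ↔ 0 < z i) with hΦ
  have hzS : ∀ i ∈ S, z i ≠ 0 := by
    intro i hi; exact (mem_filter.mp hi).2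
  -- key sum identity
  have key : ∀ x : Fin n → Bool,
      (∑ i, (if x i then z i else 0)) = (∑ i ∈ Φ x, |z i|) + c := by
    intro x
    have h1 : (∑ i, (if x i then z i else 0)) = ∑ i ∈ S, (if x i then z i else 0) := by
      rw [eq_comm]
      apply Finset.sum_subset (Finset.subset_univ S)
      intro i _ hiS
      have hz : z i = 0 := by
        by_contra hne
        exact hiS (mem_filter.mpr ⟨mem_univ i, hne⟩)
      simp [hz]
    have h2 : ∀ i ∈ S, (if x i then z i else 0)
        = (if ((x i = true) ↔ 0 < z i) then |z i| else 0) + (if z i < 0 then z i else 0) := by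
      intro i hi
      have hz := hzS i hi
      by_cases hx : x i = true <;> rcases lt_trichotomy (z i) 0 with hlt | heq | hgt
      · rw [if_pos hx, if_neg (fun h => absurd (h.mp hx) (not_lt.mpr hlt.le)),
          if_pos hlt]
        ring
      · exact absurd heq hz
      · rw [if_pos hx, if_pos (iff_of_true hx hgt), if_neg (not_lt.mpr hgt.le),
          abs_of_pos hgt]
        ring
      · rw [if_neg hx, if_pos (iff_of_false hx (not_lt.mpr hlt.le)), if_pos hlt,
          abs_of_neg hlt]
        ring
      · exact absurd heq hz
      · rw [if_neg hx, if_neg (fun h => hx (h.mpr hgt)), if_neg (not_lt.mpr hgt.le)]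
        ring
    have e1 : (∑ i ∈ Φ x, |z i|)
        = ∑ i ∈ S, (if ((x i = true) ↔ 0 < z i) then |z i| else 0) :=
      Finset.sum_filter _ _
    have e2 : c = ∑ i ∈ S, (if z i < 0 then z i else 0) := Finset.sum_filter _ _
    rw [h1, Finset.sum_congr rfl h2, Finset.sum_add_distrib, e1, e2]
  -- elements of the image
  have hmemA : ∀ x ∈ F, (Φ x ⊆ S ∧ (∑ i ∈ Φ x, |z i|) = t - c) := by
    intro x hx
    refine ⟨Finset.filter_subset _ _, ?_⟩
    have := (mem_filter.mp hx).2
    rw [key x] at this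
    omega
  set A : Finset (Finset (Fin n)) := F.image Φ with hA
  -- card F = sum of fibers
  have hcard : F.card = ∑ U ∈ A, (F.filter (fun x => Φ x = U)).card :=
    Finset.card_eq_sum_card_fiberwise (fun x hx => Finset.mem_image_of_mem Φ hx)
  -- each fiber ≤ 2^(n-m)
  have hfiber : ∀ U ∈ A, (F.filter (fun x => Φ x = U)).card ≤ 2 ^ (n - m) := by
    intro U _
    have hle : (F.filter (fun x => Φ x = U)).card
        ≤ (univ : Finset ({i : Fin n // i ∉ S} → Bool)).card := by
      apply Finset.card_le_card_of_injOn (fun x => fun i => x i.1)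
      · intro x _; exact mem_univ _
      · intro x1 hx1 x2 hx2 heq
        have hU1 : Φ x1 = U := (mem_filter.mp hx1).2
        have hU2 : Φ x2 = U := (mem_filter.mp hx2).2
        funext i
        by_cases hiS : i ∈ S
        · have e1 : i ∈ Φ x1 ↔ i ∈ Φ x2 := by rw [hU1, hU2]
          rw [hΦ] at e1
          simp only [mem_filter, hiS, true_and] at e1
          rw [Bool.eq_iff_iff]
          constructor
          · intro h1
            by_contra h2
            rcases lt_trichotomy (z i) 0 with hlt | heq | hgt
            · exact h2 (by tauto)
            · exact hzS i hiS heq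
            · exact h2 (by tauto)
          · intro h1
            by_contra h2
            rcases lt_trichotomy (z i) 0 with hlt | heq | hgt
            · exact h2 (by tauto)
            · exact hzS i hiS heq
            · exact h2 (by tauto)
        · exact congrFun heq ⟨i, hiS⟩
    have hcompl : Fintype.card {i : Fin n // i ∉ S} = n - m := by
      have h1 := Fintype.card_subtype_compl (fun i : Fin n => i ∈ S)
      have h2 : Fintype.card {i : Fin n // i ∈ S} = m := Fintype.card_coe S
      rw [h2, Fintype.card_fin] at h1
      exact h1
    calc (F.filter (fun x => Φ x = U)).card
        ≤ (univ : Finset ({i : Fin n // i ∉ S} → Bool)).card := hle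
      _ = 2 ^ (n - m) := by
          rw [Finset.card_univ, Fintype.card_fun, Fintype.card_bool, hcompl]
  -- |A| ≤ m.choose (m/2) by Sperner
  have hAcard : A.card ≤ m.choose (m / 2) := by
    have hrec : ∀ U ⊆ S, (U.subtype (· ∈ S)).map (Function.Embedding.subtype _) = U := by
      intro U hU
      rw [Finset.subtype_map]
      exact Finset.filter_true_of_mem (fun i hi => hU hi)
    have hsubA : ∀ U ∈ A, U ⊆ S := by
      intro U hU
      obtain ⟨x, hx, hUx⟩ := Finset.mem_image.mp hU
      exact hUx ▸ (hmemA x hx).1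
    have hsumA : ∀ U ∈ A, (∑ i ∈ U, |z i|) = t - c := by
      intro U hU
      obtain ⟨x, hx, hUx⟩ := Finset.mem_image.mp hU
      exact hUx ▸ (hmemA x hx).2
    have hinj : Set.InjOn (fun U => Finset.subtype (· ∈ S) U) A := by
      intro U1 h1 U2 h2 heq
      have e1 := hrec U1 (hsubA U1 h1)
      have e2 := hrec U2 (hsubA U2 h2)
      rw [← e1, ← e2]
      simp only at heq
      rw [heq]
    have hcardeq : A.card = (A.image (fun U => Finset.subtype (· ∈ S) U)).card :=
      (Finset.card_image_of_injOn hinj).symm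
    have hanti : IsAntichain (· ⊆ ·)
        ((A.image (fun U => Finset.subtype (· ∈ S) U)) :
          Set (Finset {i : Fin n // i ∈ S})) := by
      intro a ha b hb hne hab
      obtain ⟨U1, hU1A, ha'⟩ := Finset.mem_image.mp (by exact_mod_cast ha)
      obtain ⟨U2, hU2A, hb'⟩ := Finset.mem_image.mp (by exact_mod_cast hb)
      have hs1 : U1 ⊆ S := hsubA U1 hU1A
      have hs2 : U2 ⊆ S := hsubA U2 hU2A
      have hsub : U1 ⊆ U2 := by
        intro i hi
        have hiS : i ∈ S := hs1 hi
        have hmema : (⟨i, hiS⟩ : {i : Fin n // i ∈ S}) ∈ a := by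
          rw [← ha']; simpa [Finset.mem_subtype] using hi
        have := hab hmema
        rw [← hb'] at this
        simpa [Finset.mem_subtype] using this
      have hnee : U1 ≠ U2 := by
        intro h
        apply hne
        rw [← ha', ← hb', h]
      obtain ⟨j, hjU2, hjU1⟩ := Finset.exists_of_ssubset (lt_of_le_of_ne hsub hnee)
      have hlt : (∑ i ∈ U1, |z i|) < ∑ i ∈ U2, |z i| := by
        apply Finset.sum_lt_sum_of_subset hsub hjU2 hjU1
        · exact abs_pos.mpr (hzS j (hs2 hjU2))
        · intro i _ _; exact abs_nonneg _
      rw [hsumA U1 hU1A, hsumA U2 hU2A] at hlt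
      omega
    have hsp := IsAntichain.sperner hanti
    rw [Fintype.card_coe] at hsp
    rw [hcardeq, hm]
    exact hsp
  calc F.card = ∑ U ∈ A, (F.filter (fun x => Φ x = U)).card := hcard
    _ ≤ ∑ _U ∈ A, 2 ^ (n - m) := Finset.sum_le_sum hfiber
    _ = A.card * 2 ^ (n - m) := by rw [Finset.sum_const, smul_eq_mul]
    _ ≤ m.choose (m / 2) * 2 ^ (n - m) := Nat.mul_le_mul_right _ hAcard

open Finset

lemma count_support (n k m : ℕ) :
    (((Fintype.piFinset (fun _ : Fin n => Finset.Icc (-(2*k:ℤ)) (2*k))).erase 0).filter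
        (fun z => (univ.filter (fun i => z i ≠ 0)).card = m)).card
      ≤ n.choose m * (4*k+1)^m := by
  classical
  set Z := (Fintype.piFinset (fun _ : Fin n => Finset.Icc (-(2*k:ℤ)) (2*k))).erase 0 with hZ
  set G := Z.filter (fun z => (univ.filter (fun i => z i ≠ 0)).card = m) with hG
  have hmaps : ∀ z ∈ G, (univ.filter (fun i => z i ≠ 0)) ∈ powersetCard m (univ : Finset (Fin n)) := by
    intro z hz
    rw [mem_powersetCard]
    exact ⟨subset_univ _, (mem_filter.mp hz).2⟩
  have hcard := Finset.card_eq_sum_card_fiberwise hmaps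
  have hfiber : ∀ S ∈ powersetCard m (univ : Finset (Fin n)),
      (G.filter (fun z => univ.filter (fun i => z i ≠ 0) = S)).card ≤ (4*k+1)^m := by
    intro S hS
    have hSm : S.card = m := (mem_powersetCard.mp hS).2
    have hle : (G.filter (fun z => univ.filter (fun i => z i ≠ 0) = S)).card
        ≤ (Fintype.piFinset (fun _ : {i : Fin n // i ∈ S} => Finset.Icc (-(2*k:ℤ)) (2*k))).card := by
      apply Finset.card_le_card_of_injOn (fun z => fun i => z i.1)
      · intro z hz
        rw [Finset.mem_coe, Fintype.mem_piFinset]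
        intro i
        have hzZ : z ∈ Z := mem_of_mem_filter _ (mem_of_mem_filter _ hz)
        have := (Fintype.mem_piFinset.mp (mem_of_mem_erase hzZ)) i.1
        exact this
      · intro z1 hz1 z2 hz2 heq
        have hS1 : univ.filter (fun i => z1 i ≠ 0) = S := (mem_filter.mp hz1).2
        have hS2 : univ.filter (fun i => z2 i ≠ 0) = S := (mem_filter.mp hz2).2
        funext i
        by_cases hiS : i ∈ S
        · exact congrFun heq ⟨i, hiS⟩
        · have h1 : z1 i = 0 := by
            by_contra hne
            exact hiS (hS1 ▸ mem_filter.mpr ⟨mem_univ i, hne⟩)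
          have h2 : z2 i = 0 := by
            by_contra hne
            exact hiS (hS2 ▸ mem_filter.mpr ⟨mem_univ i, hne⟩)
          rw [h1, h2]
    calc (G.filter (fun z => univ.filter (fun i => z i ≠ 0) = S)).card
        ≤ (Fintype.piFinset (fun _ : {i : Fin n // i ∈ S} => Finset.Icc (-(2*k:ℤ)) (2*k))).card := hle
      _ = (4*k+1)^m := by
          rw [Fintype.card_piFinset]
          rw [Finset.prod_const]
          have hIcc : (Finset.Icc (-(2*k:ℤ)) (2*k)).card = 4*k+1 := by
            rw [Int.card_Icc]
            rw [show (2*(k:ℤ) + 1 - -(2*(k:ℤ))) = ((4*k+1 : ℕ) : ℤ) by push_cast; ring]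
            exact Int.toNat_natCast _
          rw [hIcc, Finset.card_univ, Fintype.card_coe, hSm]
  calc G.card = ∑ S ∈ powersetCard m (univ : Finset (Fin n)),
        (G.filter (fun z => univ.filter (fun i => z i ≠ 0) = S)).card := hcard
    _ ≤ ∑ _S ∈ powersetCard m (univ : Finset (Fin n)), (4*k+1)^m := Finset.sum_le_sum hfiber
    _ = (powersetCard m (univ : Finset (Fin n))).card * (4*k+1)^m := by
        rw [Finset.sum_const, smul_eq_mul]
    _ = n.choose m * (4*k+1)^m := by
        rw [Finset.card_powersetCard, Finset.card_univ, Fintype.card_fin]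

lemma exists_good (n k s : ℕ) (hn : 2 ≤ n)
    (hterm : ∀ m : ℕ, 1 ≤ m → m ≤ n →
      ((n.choose m : ℝ) * (4*k+1)^m * ((m.choose (m/2) : ℝ) * 2^(n-m))^s
        ≤ (2:ℝ)^(n*s) / (2*n))) :
    ∃ X : Fin s → Fin n → Bool,
      ∀ z : Fin n → ℤ, (∀ i, |z i| ≤ 2*k) → z ≠ 0 →
        ∃ j, (∑ i, if X j i then z i else 0) ≠ 0 := by
  classical
  set Z := (Fintype.piFinset (fun _ : Fin n => Finset.Icc (-(2*k:ℤ)) (2*k))).erase 0 with hZ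
  set Bad : (Fin n → ℤ) → Finset (Fin n → Bool) :=
    fun z => univ.filter (fun x => (∑ i, if x i then z i else 0) = 0) with hBad
  set BadX : (Fin n → ℤ) → Finset (Fin s → Fin n → Bool) :=
    fun z => Fintype.piFinset (fun _ : Fin s => Bad z) with hBadX
  have hBadXcard : ∀ z, (BadX z).card = (Bad z).card ^ s := by
    intro z
    rw [hBadX]
    rw [Fintype.card_piFinset, Finset.prod_const, Finset.card_univ, Fintype.card_fin]
  -- total space
  have htotal : (univ : Finset (Fin s → Fin n → Bool)).card = 2 ^ (n*s) := by
    rw [Finset.card_univ, Fintype.card_fun, Fintype.card_fun, Fintype.card_bool,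
      Fintype.card_fin, Fintype.card_fin, ← pow_mul]
  -- the sum bound, in ℝ
  have hsum : ((∑ z ∈ Z, (Bad z).card ^ s : ℕ) : ℝ) < (2:ℝ)^(n*s) := by
    -- fiberwise by support cardinality
    have hmaps : ∀ z ∈ Z, (univ.filter (fun i => z i ≠ 0)).card ∈ Finset.range (n+1) := by
      intro z _
      rw [Finset.mem_range]
      have := Finset.card_le_card (Finset.subset_univ (univ.filter (fun i => z i ≠ 0)))
      rw [Finset.card_univ, Fintype.card_fin] at this
      omega
    have hfib := Finset.sum_fiberwise_of_maps_to hmaps (fun z => (Bad z).card ^ s)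
    rw [← hfib]
    -- bound each fiber
    have hptwise : ∀ m ∈ Finset.range (n+1),
        ((∑ z ∈ Z.filter (fun z => (univ.filter (fun i => z i ≠ 0)).card = m),
          (Bad z).card ^ s : ℕ) : ℝ) ≤ (2:ℝ)^(n*s) / (2*n) := by
      intro m hm
      rw [Finset.mem_range] at hm
      rcases Nat.eq_zero_or_pos m with hm0 | hm1
      · -- empty fiber
        have hempty : Z.filter (fun z => (univ.filter (fun i => z i ≠ 0)).card = m) = ∅ := by
          rw [Finset.eq_empty_iff_forall_notMem]
          intro z hz
          have hzZ := mem_of_mem_filter _ hz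
          have hz0 : z ≠ 0 := Finset.ne_of_mem_erase hzZ
          have hcard0 := (mem_filter.mp hz).2
          rw [hm0] at hcard0
          apply hz0
          funext i
          by_contra hne
          have : i ∈ univ.filter (fun i => z i ≠ 0) := mem_filter.mpr ⟨mem_univ i, hne⟩
          rw [Finset.card_eq_zero.mp hcard0] at this
          exact absurd this (Finset.notMem_empty i)
        rw [hempty]
        simp only [Finset.sum_empty, Nat.cast_zero]
        positivity
      · -- nonempty fiber: bound each term by (m.choose (m/2) * 2^(n-m))^s
        have hterm' : ∀ z ∈ Z.filter (fun z => (univ.filter (fun i => z i ≠ 0)).card = m),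
            (Bad z).card ^ s ≤ (m.choose (m/2) * 2^(n-m)) ^ s := by
          intro z hz
          have hcardm := (mem_filter.mp hz).2
          apply Nat.pow_le_pow_left
          have := count_bad z 0
          rw [hcardm] at this
          exact this
        have h1 : (∑ z ∈ Z.filter (fun z => (univ.filter (fun i => z i ≠ 0)).card = m),
            (Bad z).card ^ s)
            ≤ (Z.filter (fun z => (univ.filter (fun i => z i ≠ 0)).card = m)).card
              * (m.choose (m/2) * 2^(n-m)) ^ s := by
          calc _ ≤ ∑ _z ∈ Z.filter (fun z => (univ.filter (fun i => z i ≠ 0)).card = m),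
              (m.choose (m/2) * 2^(n-m)) ^ s := Finset.sum_le_sum hterm'
            _ = _ := by rw [Finset.sum_const, smul_eq_mul]
        have h2 := count_support n k m
        have h3 : (∑ z ∈ Z.filter (fun z => (univ.filter (fun i => z i ≠ 0)).card = m),
            (Bad z).card ^ s)
            ≤ (n.choose m * (4*k+1)^m) * (m.choose (m/2) * 2^(n-m)) ^ s :=
          h1.trans (Nat.mul_le_mul_right _ h2)
        calc ((∑ z ∈ Z.filter (fun z => (univ.filter (fun i => z i ≠ 0)).card = m),
            (Bad z).card ^ s : ℕ) : ℝ)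
            ≤ ((n.choose m * (4*k+1)^m) * (m.choose (m/2) * 2^(n-m)) ^ s : ℕ) := by
              exact_mod_cast h3
          _ = (n.choose m : ℝ) * (4*k+1)^m * ((m.choose (m/2) : ℝ) * 2^(n-m))^s := by
              push_cast; ring
          _ ≤ (2:ℝ)^(n*s) / (2*n) := hterm m hm1 (Nat.lt_succ_iff.mp hm)
    calc ((∑ m ∈ Finset.range (n+1), ∑ z ∈ Z.filter
            (fun z => (univ.filter (fun i => z i ≠ 0)).card = m), (Bad z).card ^ s : ℕ) : ℝ)
        = ∑ m ∈ Finset.range (n+1), ((∑ z ∈ Z.filter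
            (fun z => (univ.filter (fun i => z i ≠ 0)).card = m), (Bad z).card ^ s : ℕ) : ℝ) := by
          push_cast; ring
      _ ≤ ∑ _m ∈ Finset.range (n+1), (2:ℝ)^(n*s) / (2*n) := Finset.sum_le_sum hptwise
      _ = (n+1) * ((2:ℝ)^(n*s) / (2*n)) := by
          rw [Finset.sum_const, Finset.card_range, nsmul_eq_mul]
          push_cast; ring
      _ < (2:ℝ)^(n*s) := by
          have hn' : (2:ℝ) ≤ (n:ℝ) := by exact_mod_cast hn
          have hpow : (0:ℝ) < (2:ℝ)^(n*s) := by positivity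
          rw [div_eq_mul_inv]
          rw [show ((n:ℝ)+1) * ((2:ℝ)^(n*s) * (2*(n:ℝ))⁻¹)
              = (((n:ℝ)+1)/(2*(n:ℝ))) * (2:ℝ)^(n*s) by ring]
          have hfrac : ((n:ℝ)+1)/(2*(n:ℝ)) < 1 := by
            rw [div_lt_one (by linarith)]
            linarith
          nlinarith
  -- extract a good X
  have hbiUnion : (Z.biUnion BadX).card < (univ : Finset (Fin s → Fin n → Bool)).card := by
    calc (Z.biUnion BadX).card ≤ ∑ z ∈ Z, (BadX z).card := Finset.card_biUnion_le
      _ = ∑ z ∈ Z, (Bad z).card ^ s := by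
          apply Finset.sum_congr rfl
          intro z _
          exact hBadXcard z
      _ < 2 ^ (n*s) := by exact_mod_cast hsum
      _ = (univ : Finset (Fin s → Fin n → Bool)).card := htotal.symm
  have hex : ∃ X : Fin s → Fin n → Bool, X ∉ Z.biUnion BadX := by
    by_contra h
    push_neg at h
    have hsub : (univ : Finset (Fin s → Fin n → Bool)) ⊆ Z.biUnion BadX :=
      fun X _ => h X
    exact absurd (Finset.card_le_card hsub) (not_le.mpr hbiUnion)
  obtain ⟨X, hX⟩ := hex
  refine ⟨X, ?_⟩
  intro z hzb hz0
  have hzZ : z ∈ Z := by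
    rw [hZ, Finset.mem_erase]
    refine ⟨hz0, ?_⟩
    rw [Fintype.mem_piFinset]
    intro i
    rw [Finset.mem_Icc]
    have := hzb i
    rw [abs_le] at this
    constructor
    · have := this.1; push_cast; linarith
    · have := this.2; push_cast; linarith
  have hXz : X ∉ BadX z := fun hmem => hX (Finset.mem_biUnion.mpr ⟨z, hzZ, hmem⟩)
  rw [hBadX] at hXz
  rw [Fintype.mem_piFinset] at hXz
  push_neg at hXz
  obtain ⟨j, hj⟩ := hXz
  refine ⟨j, ?_⟩
  intro heq
  exact hj (mem_filter.mpr ⟨mem_univ _, heq⟩)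



lemma glue (n s k : ℕ) (hk : 1 ≤ k) (X : Fin s → Fin n → ℤ)
    (hXb : ∀ j i, |X j i| ≤ (k:ℤ))
    (hX : ∀ z : Fin n → ℤ, (∀ i, |z i| ≤ 2*(k:ℤ)) →
      (∀ j, (∑ i, X j i * z i) = 0) → z = 0) :
    ∃ x : Fin (s+1) → Fin n → ℤ,
      (∀ j i, |x j i| ≤ (k:ℤ)) ∧
      Set.InjOn
        (fun y : Fin n → ℤ => fun j : Fin (s+1) =>
          Real.sqrt (∑ i, ((y i : ℝ) - (x j i : ℝ)) ^ 2))
        {y : Fin n → ℤ | ∀ i, |y i| ≤ (k : ℤ)} := by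
  classical
  refine ⟨Fin.cons 0 X, ?_, ?_⟩
  · intro j i
    refine Fin.cases ?_ ?_ j
    · simp
    · intro j'
      simpa using hXb j' i
  · intro y hy y' hy' heq
    simp only [Set.mem_setOf_eq] at hy hy'
    -- squared sums are equal for each query
    have hsq : ∀ j : Fin (s+1),
        (∑ i, ((y i : ℝ) - ((Fin.cons 0 X : Fin (s+1) → Fin n → ℤ) j i : ℝ)) ^ 2)
          = ∑ i, ((y' i : ℝ) - ((Fin.cons 0 X : Fin (s+1) → Fin n → ℤ) j i : ℝ)) ^ 2 := by
      intro j
      have h := congrFun heq j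
      simp only at h
      have h1 : (0:ℝ) ≤ ∑ i, ((y i : ℝ) - ((Fin.cons 0 X : Fin (s+1) → Fin n → ℤ) j i : ℝ)) ^ 2 :=
        Finset.sum_nonneg fun i _ => sq_nonneg _
      have h2 : (0:ℝ) ≤ ∑ i, ((y' i : ℝ) - ((Fin.cons 0 X : Fin (s+1) → Fin n → ℤ) j i : ℝ)) ^ 2 :=
        Finset.sum_nonneg fun i _ => sq_nonneg _
      calc (∑ i, ((y i : ℝ) - ((Fin.cons 0 X : Fin (s+1) → Fin n → ℤ) j i : ℝ)) ^ 2)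
          = Real.sqrt (∑ i, ((y i : ℝ) - ((Fin.cons 0 X : Fin (s+1) → Fin n → ℤ) j i : ℝ)) ^ 2) ^2 := by
            rw [Real.sq_sqrt h1]
        _ = Real.sqrt (∑ i, ((y' i : ℝ) - ((Fin.cons 0 X : Fin (s+1) → Fin n → ℤ) j i : ℝ)) ^ 2) ^2 := by
            rw [h]
        _ = _ := Real.sq_sqrt h2
    -- norms are equal (query 0)
    have hnorm : (∑ i, (y i : ℝ) ^ 2) = ∑ i, (y' i : ℝ) ^ 2 := by
      have := hsq 0
      simpa using this
    -- each linear form vanishes on the difference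
    have hlin : ∀ j : Fin s, (∑ i, (X j i : ℝ) * ((y i : ℝ) - (y' i : ℝ))) = 0 := by
      intro j
      have hj := hsq j.succ
      simp only [Fin.cons_succ] at hj
      have expand : ∀ (w : Fin n → ℤ),
          (∑ i, ((w i : ℝ) - (X j i : ℝ)) ^ 2)
            = (∑ i, (w i : ℝ)^2) - 2 * (∑ i, (X j i : ℝ) * (w i : ℝ))
              + ∑ i, (X j i : ℝ)^2 := by
        intro w
        have hio : ∀ i : Fin n, ((w i:ℝ) - (X j i:ℝ))^2
            = ((w i:ℝ)^2 - 2*((X j i:ℝ)*(w i:ℝ))) + (X j i:ℝ)^2 := fun i => by ring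
        rw [Finset.sum_congr rfl (fun i _ => hio i), Finset.sum_add_distrib,
          Finset.sum_sub_distrib, Finset.mul_sum]
      rw [expand y, expand y'] at hj
      rw [hnorm] at hj
      have : (∑ i, (X j i : ℝ) * (y i : ℝ)) = ∑ i, (X j i : ℝ) * (y' i : ℝ) := by linarith
      have hsplit : (∑ i, (X j i : ℝ) * ((y i : ℝ) - (y' i : ℝ)))
          = (∑ i, (X j i : ℝ) * (y i : ℝ)) - ∑ i, (X j i : ℝ) * (y' i : ℝ) := by
        rw [← Finset.sum_sub_distrib]
        exact Finset.sum_congr rfl (fun i _ => by ring)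
      rw [hsplit, this, sub_self]
    -- cast to ℤ and conclude
    have hz : (fun i => y i - y' i) = 0 := by
      apply hX
      · intro i
        have h1 := hy i
        have h2 := hy' i
        have : |y i - y' i| ≤ |y i| + |y' i| := abs_sub _ _
        have hk' : (k:ℤ) + (k:ℤ) = 2*(k:ℤ) := by ring
        calc |y i - y' i| ≤ |y i| + |y' i| := abs_sub _ _
          _ ≤ (k:ℤ) + (k:ℤ) := add_le_add h1 h2
          _ = 2*(k:ℤ) := by ring
      · intro j
        have := hlin j
        have hcast : ((∑ i, X j i * (y i - y' i) : ℤ) : ℝ)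
            = ∑ i, (X j i : ℝ) * ((y i : ℝ) - (y' i : ℝ)) := by
          push_cast
          ring
        have : ((∑ i, X j i * (y i - y' i) : ℤ) : ℝ) = 0 := by rw [hcast]; exact this
        exact_mod_cast this
    funext i
    have := congrFun hz i
    simp only [Pi.zero_apply] at this
    omega

set_option maxHeartbeats 2000000 in
lemma arith (n k m s : ℕ) (hn2 : 2 ≤ n) (hk : 1 ≤ k) (hkn : 2*k+1 ≤ n)
    (hm1 : 1 ≤ m) (hmn : m ≤ n)
    (hs : (200:ℝ) * n * Real.log (4*k+1) / Real.log n ≤ (s:ℝ)) :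
    (n.choose m : ℝ) * (4*k+1)^m * ((m.choose (m/2) : ℝ) * 2^(n-m))^s
      ≤ (2:ℝ)^(n*s) / (2*n) := by
  have hn1 : (1:ℝ) < (n:ℝ) := by exact_mod_cast hn2.trans_lt' one_lt_two
  have hnR : (2:ℝ) ≤ (n:ℝ) := by exact_mod_cast hn2
  set ℓ := Real.log n with hℓ
  set L := Real.log (4*(k:ℝ)+1) with hL
  have hlpos : 0 < ℓ := Real.log_pos hn1
  have hkR : (1:ℝ) ≤ (k:ℝ) := by exact_mod_cast hk
  have h4k : (4:ℝ) ≤ 4*(k:ℝ)+1 := by linarith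
  have hlog2 : (0.6931471803:ℝ) < Real.log 2 := Real.log_two_gt_d9
  have hlog2' : Real.log 2 < 0.6931471808 := Real.log_two_lt_d9
  have hL4 : Real.log 4 ≤ L := Real.log_le_log (by norm_num) h4k
  have hlog4 : Real.log 4 = 2 * Real.log 2 := by
    rw [show (4:ℝ) = 2^2 by norm_num, Real.log_pow]
    push_cast; ring
  have hLlb : (1.386:ℝ) ≤ L := by rw [hlog4] at hL4; linarith
  have hLpos : (0:ℝ) < L := by linarith
  have hl2 : Real.log 2 ≤ ℓ := Real.log_le_log (by norm_num) hnR
  have hlub : ℓ ≤ (n:ℝ) := by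
    have := Real.log_le_sub_one_of_pos (show (0:ℝ) < n by linarith)
    linarith
  -- sqrt facts
  set r := Real.sqrt n with hr
  set u := Real.sqrt r with hu
  have hrpos : 0 < r := Real.sqrt_pos.mpr (by linarith)
  have hupos : 0 < u := Real.sqrt_pos.mpr hrpos
  have hr2 : r^2 = (n:ℝ) := Real.sq_sqrt (by linarith)
  have hu2 : u^2 = r := Real.sq_sqrt hrpos.le
  have hrr : r * r = (n:ℝ) := by rw [← pow_two r]; exact hr2
  have huu : u * u = r := by rw [← pow_two u]; exact hu2
  have hr1 : (1:ℝ) ≤ r := by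
    rw [hr, show (1:ℝ) = Real.sqrt 1 by simp]
    exact Real.sqrt_le_sqrt (by linarith)
  have hu1 : (1:ℝ) ≤ u := by
    rw [hu, show (1:ℝ) = Real.sqrt 1 by simp]
    exact Real.sqrt_le_sqrt hr1
  have hrn : r ≤ (n:ℝ) := by
    calc r = r*1 := (mul_one r).symm
      _ ≤ r*r := mul_le_mul_of_nonneg_left hr1 (by linarith)
      _ = (n:ℝ) := hrr
  have hur : u ≤ r := by
    calc u = u*1 := (mul_one u).symm
      _ ≤ u*u := mul_le_mul_of_nonneg_left hu1 (by linarith)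
      _ = r := huu
  have hlu : ℓ ≤ 4*u := by
    have h1 : Real.log r = ℓ / 2 := Real.log_sqrt (by linarith)
    have h2 : Real.log u = Real.log r / 2 := Real.log_sqrt hrpos.le
    have h3 := Real.log_le_sub_one_of_pos hupos
    rw [h1] at h2
    linarith
  have hl2u : ℓ^2 ≤ 16*r := by
    calc ℓ^2 ≤ (4*u)^2 := pow_le_pow_left₀ hlpos.le hlu 2
      _ = 16*r := by rw [mul_pow, hu2]; norm_num
  have hm1R : (1:ℝ) ≤ (m:ℝ) := by exact_mod_cast hm1
  have hmnR : (m:ℝ) ≤ (n:ℝ) := by exact_mod_cast hmn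
  have hspos : (0:ℝ) ≤ (s:ℝ) := Nat.cast_nonneg s
  have hsl : 200 * (n:ℝ) * L ≤ (s:ℝ) * ℓ := by
    rw [div_le_iff₀ hlpos] at hs
    exact hs
  have hchoosepos : (0:ℝ) < (n.choose m : ℝ) := by
    exact_mod_cast Nat.choose_pos hmn
  have hlogchoose2 : Real.log (n.choose m) ≤ (n:ℝ) * Real.log 2 := by
    have h : n.choose m ≤ 2^n := by
      rw [← Nat.sum_range_choose n]
      exact Finset.single_le_sum (fun i _ => Nat.zero_le _)
        (Finset.mem_range.mpr (by omega))
    calc Real.log (n.choose m) ≤ Real.log ((2:ℝ)^n) :=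
          Real.log_le_log hchoosepos (by exact_mod_cast h)
      _ = (n:ℝ) * Real.log 2 := by rw [Real.log_pow]
  have hlogchoosen : Real.log (n.choose m) ≤ (m:ℝ) * ℓ := by
    have h : n.choose m ≤ n ^ m := Nat.choose_le_pow n m
    calc Real.log (n.choose m) ≤ Real.log ((n:ℝ)^m) :=
          Real.log_le_log hchoosepos (by exact_mod_cast h)
      _ = (m:ℝ) * ℓ := by rw [Real.log_pow]
  have hlog2n : Real.log (2*(n:ℝ)) ≤ 2*ℓ := by
    rw [Real.log_mul (by norm_num) (by linarith)]
    linarith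
  -- KEY log inequality
  have key : Real.log (2*(n:ℝ)) + Real.log (n.choose m) + (m:ℝ) * L
      ≤ (s:ℝ) * (Real.log ((m:ℝ)+1) / 2) := by
    rcases le_total ((n:ℝ)) (((m:ℝ)+1)^2) with hcase | hcase
    · -- large m : log(m+1) ≥ ℓ/2
      have hlogm : ℓ/2 ≤ Real.log ((m:ℝ)+1) := by
        have h1 : ℓ ≤ Real.log (((m:ℝ)+1)^2) := Real.log_le_log (by linarith) hcase
        rw [Real.log_pow] at h1
        push_cast at h1
        linarith
      have hrhs : 50 * ((n:ℝ) * L) ≤ (s:ℝ) * (Real.log ((m:ℝ)+1) / 2) := by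
        have h1 : (s:ℝ) * (ℓ/2) ≤ (s:ℝ) * Real.log ((m:ℝ)+1) :=
          mul_le_mul_of_nonneg_left hlogm hspos
        have e1 : (s:ℝ) * (ℓ/2) = ((s:ℝ) * ℓ)/2 := by ring
        have e2 : (s:ℝ) * (Real.log ((m:ℝ)+1) / 2) = ((s:ℝ) * Real.log ((m:ℝ)+1))/2 := by
          ring
        rw [e1] at h1
        rw [e2]
        linarith
      have hn0 : (0:ℝ) ≤ (n:ℝ) := by linarith
      have h2 : (n:ℝ) * Real.log 2 ≤ 0.7 * (n:ℝ) := by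
        have := mul_le_mul_of_nonneg_left hlog2'.le hn0
        linarith
      have h3 : (m:ℝ) * L ≤ (n:ℝ) * L := mul_le_mul_of_nonneg_right hmnR hLpos.le
      have h4 : 2.7 * (n:ℝ) ≤ 2 * ((n:ℝ) * L) := by
        have := mul_le_mul_of_nonneg_left hLlb hn0
        linarith
      have h5 : 0 ≤ (n:ℝ) * L := by positivity
      linarith
    · -- small m : m+1 ≤ √n, log(m+1) ≥ log 2
      have hmr : (m:ℝ)+1 ≤ r := by
        have := Real.sqrt_le_sqrt hcase
        rwa [Real.sqrt_sq (by linarith : (0:ℝ) ≤ (m:ℝ)+1)] at this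
      have hlogm : Real.log 2 ≤ Real.log ((m:ℝ)+1) :=
        Real.log_le_log (by norm_num) (by linarith)
      -- multiply through by 2ℓ
      have hn0 : (0:ℝ) ≤ (n:ℝ) := by linarith
      have hmR : (m:ℝ) ≤ r := by linarith
      have hmain : 2*ℓ * (Real.log (2*(n:ℝ)) + Real.log (n.choose m) + (m:ℝ)*L)
          ≤ 138 * ((n:ℝ) * L) := by
        have hb1 : 2*ℓ * Real.log (2*(n:ℝ)) ≤ 4*ℓ^2 := by
          calc 2*ℓ * Real.log (2*(n:ℝ)) ≤ 2*ℓ * (2*ℓ) :=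
              mul_le_mul_of_nonneg_left hlog2n (by positivity)
            _ = 4*ℓ^2 := by ring
        have hb2 : 2*ℓ * Real.log (n.choose m) ≤ 2*(m:ℝ)*ℓ^2 := by
          calc 2*ℓ * Real.log (n.choose m) ≤ 2*ℓ * ((m:ℝ)*ℓ) :=
              mul_le_mul_of_nonneg_left hlogchoosen (by positivity)
            _ = 2*(m:ℝ)*ℓ^2 := by ring
        have hb3 : 4*ℓ^2 ≤ 64*r := by linarith
        have hb4 : 2*(m:ℝ)*ℓ^2 ≤ 32*(n:ℝ) := by
          have e1 : 2*(m:ℝ)*ℓ^2 ≤ 2*r*ℓ^2 := by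
            apply mul_le_mul_of_nonneg_right _ (sq_nonneg ℓ)
            linarith
          have e2 : 2*r*ℓ^2 ≤ 2*r*(16*r) :=
            mul_le_mul_of_nonneg_left hl2u (by positivity)
          have e3 : 2*r*(16*r) = 32*(n:ℝ) := by
            calc 2*r*(16*r) = 32*(r*r) := by ring
              _ = 32*(n:ℝ) := by rw [hrr]
          linarith
        have hb5 : 2*ℓ*((m:ℝ)*L) ≤ 8*((n:ℝ)*L) := by
          have hmL : (0:ℝ) ≤ (m:ℝ)*L := by positivity
          have e1 : 2*ℓ*((m:ℝ)*L) ≤ 2*(4*u)*((m:ℝ)*L) := by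
            apply mul_le_mul_of_nonneg_right _ hmL
            linarith
          have e2 : 2*(4*u)*((m:ℝ)*L) ≤ 2*(4*u)*(r*L) := by
            apply mul_le_mul_of_nonneg_left _ (by positivity)
            exact mul_le_mul_of_nonneg_right hmR hLpos.le
          have e3 : u*r ≤ (n:ℝ) := by
            calc u*r ≤ r*r := mul_le_mul_of_nonneg_right hur hrpos.le
              _ = (n:ℝ) := hrr
          have e4 : 2*(4*u)*(r*L) ≤ 8*((n:ℝ)*L) := by
            have : 2*(4*u)*(r*L) = 8*((u*r)*L) := by ring
            rw [this]
            apply mul_le_mul_of_nonneg_left _ (by norm_num : (0:ℝ) ≤ 8)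
            exact mul_le_mul_of_nonneg_right e3 hLpos.le
          linarith
        have hb6 : (64:ℝ)*r ≤ 64*(n:ℝ) := by linarith
        have hb7 : (96:ℝ)*(n:ℝ) ≤ 70*((n:ℝ)*L) := by
          have := mul_le_mul_of_nonneg_left hLlb hn0
          linarith
        have expand : 2*ℓ * (Real.log (2*(n:ℝ)) + Real.log (n.choose m) + (m:ℝ)*L)
            = 2*ℓ * Real.log (2*(n:ℝ)) + 2*ℓ * Real.log (n.choose m) + 2*ℓ*((m:ℝ)*L) := by
          ring
        rw [expand]
        linarith
      have hrl : 138 * ((n:ℝ)*L) ≤ (s:ℝ)*ℓ*Real.log ((m:ℝ)+1) := by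
        have hsl0 : (0:ℝ) ≤ (s:ℝ)*ℓ := by positivity
        have h1 : (s:ℝ)*ℓ*Real.log 2 ≤ (s:ℝ)*ℓ*Real.log ((m:ℝ)+1) :=
          mul_le_mul_of_nonneg_left hlogm hsl0
        have h2 : (200*((n:ℝ)*L))*0.6931471803 ≤ ((s:ℝ)*ℓ)*Real.log 2 := by
          apply mul_le_mul _ hlog2.le (by norm_num) hsl0
          linarith
        have hnL0 : 0 ≤ (n:ℝ)*L := by positivity
        linarith
      have hfin : 2*ℓ * (Real.log (2*(n:ℝ)) + Real.log (n.choose m) + (m:ℝ)*L)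
          ≤ 2*ℓ * ((s:ℝ) * (Real.log ((m:ℝ)+1) / 2)) := by
        have : 2*ℓ * ((s:ℝ) * (Real.log ((m:ℝ)+1) / 2)) = (s:ℝ)*ℓ*Real.log ((m:ℝ)+1) := by
          ring
        rw [this]
        linarith
      exact le_of_mul_le_mul_left hfin (by linarith)
  -- From key, deduce the main inequality
  set q := Real.sqrt ((m:ℝ)+1) with hqdef
  have hm10 : (0:ℝ) ≤ (m:ℝ)+1 := by linarith
  have hq2 : q^2 = (m:ℝ)+1 := Real.sq_sqrt hm10
  have hq1 : (1:ℝ) ≤ q := by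
    calc (1:ℝ) = Real.sqrt 1 := by simp
      _ ≤ q := by rw [hqdef]; exact Real.sqrt_le_sqrt (by linarith)
  have hqpos : (0:ℝ) < q := by linarith
  set c := (m.choose (m/2) : ℝ) with hcdef
  have hc0 : (0:ℝ) < c := by
    rw [hcdef]
    exact_mod_cast Nat.choose_pos (Nat.div_le_self m 2)
  -- c * q ≤ 2^m
  have hcq : c * q ≤ 2^m := by
    have hNat := choose_half_sq_le m
    have hR : c^2 * ((m:ℝ)+1) ≤ 4^m := by
      have : ((m.choose (m/2))^2 * (m+1) : ℕ) ≤ ((4:ℕ)^m : ℕ) := hNat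
      calc c^2 * ((m:ℝ)+1) = (((m.choose (m/2))^2 * (m+1) : ℕ) : ℝ) := by push_cast; ring
        _ ≤ (((4:ℕ)^m : ℕ) : ℝ) := by exact_mod_cast this
        _ = 4^m := by push_cast; ring
    have hsq : (c*q)^2 ≤ ((2:ℝ)^m)^2 := by
      calc (c*q)^2 = c^2 * q^2 := by ring
        _ = c^2 * ((m:ℝ)+1) := by rw [hq2]
        _ ≤ 4^m := hR
        _ = ((2:ℝ)^m)^2 := by
            rw [← pow_mul, mul_comm m 2, pow_mul]
            norm_num
    have h1 : (0:ℝ) ≤ c*q := by positivity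
    have h2 : (0:ℝ) ≤ (2:ℝ)^m := by positivity
    have h3 := Real.sqrt_le_sqrt hsq
    rwa [Real.sqrt_sq h1, Real.sqrt_sq h2] at h3
  -- A := 2n * (choose * (4k+1)^m) ≤ q^s
  have hApos : (0:ℝ) < 2*(n:ℝ) * ((n.choose m : ℝ) * (4*(k:ℝ)+1)^m) := by positivity
  have hkey2 : 2*(n:ℝ) * ((n.choose m : ℝ) * (4*(k:ℝ)+1)^m) ≤ q^s := by
    have hlogA : Real.log (2*(n:ℝ) * ((n.choose m : ℝ) * (4*(k:ℝ)+1)^m))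
        = Real.log (2*(n:ℝ)) + Real.log (n.choose m) + (m:ℝ)*L := by
      rw [Real.log_mul (by positivity) (by positivity),
        Real.log_mul (by positivity) (by positivity),
        Real.log_mul (by positivity) (by positivity), Real.log_pow]
      push_cast
      ring
    have hlogq : Real.log (q^s) = (s:ℝ) * (Real.log ((m:ℝ)+1) / 2) := by
      rw [Real.log_pow, hqdef, Real.log_sqrt hm10]
    have hle : Real.log (2*(n:ℝ) * ((n.choose m : ℝ) * (4*(k:ℝ)+1)^m)) ≤ Real.log (q^s) := by
      rw [hlogA, hlogq]
      exact key
    calc 2*(n:ℝ) * ((n.choose m : ℝ) * (4*(k:ℝ)+1)^m)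
        = Real.exp (Real.log (2*(n:ℝ) * ((n.choose m : ℝ) * (4*(k:ℝ)+1)^m))) :=
          (Real.exp_log hApos).symm
      _ ≤ Real.exp (Real.log (q^s)) := Real.exp_le_exp.mpr hle
      _ = q^s := Real.exp_log (by positivity)
  -- conclude
  have hstep1 : c * 2^(n-m) ≤ (2:ℝ)^n / q := by
    have h1 : c ≤ 2^m / q := by
      rw [le_div_iff₀ hqpos]
      exact hcq
    have h2 : c * 2^(n-m) ≤ (2^m / q) * 2^(n-m) :=
      mul_le_mul_of_nonneg_right h1 (by positivity)
    have h3 : ((2:ℝ)^m / q) * 2^(n-m) = (2:ℝ)^n / q := by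
      rw [div_mul_eq_mul_div, ← pow_add]
      congr 2
      omega
    linarith
  have hstep2 : (c * 2^(n-m))^s ≤ ((2:ℝ)^n / q)^s :=
    pow_le_pow_left₀ (by positivity) hstep1 s
  have hstep3 : ((2:ℝ)^n / q)^s = (2:ℝ)^(n*s) / q^s := by
    rw [div_pow, ← pow_mul]
  have hfrac : (n.choose m : ℝ) * (4*(k:ℝ)+1)^m / q^s ≤ 1/(2*(n:ℝ)) := by
    rw [div_le_div_iff₀ (by positivity) (by positivity)]
    have e : (n.choose m : ℝ) * (4*(k:ℝ)+1)^m * (2*(n:ℝ))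
        = 2*(n:ℝ) * ((n.choose m : ℝ) * (4*(k:ℝ)+1)^m) := by ring
    rw [e]
    linarith [hkey2]
  calc (n.choose m : ℝ) * (4*(k:ℝ)+1)^m * (c * 2^(n-m))^s
      ≤ (n.choose m : ℝ) * (4*(k:ℝ)+1)^m * ((2:ℝ)^(n*s) / q^s) := by
        apply mul_le_mul_of_nonneg_left _ (by positivity)
        rw [← hstep3]
        exact hstep2
    _ = ((n.choose m : ℝ) * (4*(k:ℝ)+1)^m / q^s) * (2:ℝ)^(n*s) := by ring
    _ ≤ (1/(2*(n:ℝ))) * (2:ℝ)^(n*s) := by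
        apply mul_le_mul_of_nonneg_right hfrac (by positivity)
    _ = (2:ℝ)^(n*s) / (2*(n:ℝ)) := by ring





/-- Nonadaptive ℓ₂-query Mastermind upper bound: there is an absolute constant `C > 0`
such that for all `n ≥ 2`, `k ≥ 1` there are `s ≤ C·(1 + min{n, n·log(2k+1)/log n})`
query vectors in `{-k,…,k}^n` whose ℓ₂-distance answer map is injective on `{-k,…,k}^n`. -/
theorem mastermind_l2_upper :
    ∃ C : ℝ, 0 < C ∧ ∀ n k : ℕ, 2 ≤ n → 1 ≤ k →
      ∃ (s : ℕ) (x : Fin s → Fin n → ℤ),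
        (s : ℝ) ≤ C * (1 + min (n : ℝ)
            ((n : ℝ) * Real.log (2 * (k : ℝ) + 1) / Real.log (n : ℝ))) ∧
        (∀ j i, |x j i| ≤ (k : ℤ)) ∧
        Set.InjOn
          (fun y : Fin n → ℤ => fun j : Fin s =>
            Real.sqrt (∑ i, ((y i : ℝ) - (x j i : ℝ)) ^ 2))
          {y : Fin n → ℤ | ∀ i, |y i| ≤ (k : ℤ)} := by
  refine ⟨1000, by norm_num, ?_⟩
  intro n k hn hk
  have hn1 : (1:ℝ) < (n:ℝ) := by exact_mod_cast hn.trans_lt' one_lt_two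
  have hlpos : (0:ℝ) < Real.log n := Real.log_pos hn1
  have hkR : (1:ℝ) ≤ (k:ℝ) := by exact_mod_cast hk
  have hL'pos : (0:ℝ) < Real.log (2*(k:ℝ)+1) := Real.log_pos (by linarith)
  by_cases hcase : n ≤ 2*k+1
  · -- trivial scheme with n+1 queries
    obtain ⟨x, hxb, hinj⟩ := glue n n k hk (fun j i => if i = j then (k:ℤ) else 0)
      (by
        intro j i
        by_cases h : i = j <;> simp [h])
      (by
        intro z hzb hzsum
        funext j
        have := hzsum j
        have hsum : (∑ i, (if i = j then (k:ℤ) else 0) * z i) = (k:ℤ) * z j := by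
          rw [Finset.sum_eq_single j]
          · simp
          · intro b _ hb
            simp [hb]
          · intro h
            exact absurd (Finset.mem_univ j) h
        rw [hsum] at this
        have hk0 : (k:ℤ) ≠ 0 := by positivity
        simpa using mul_eq_zero.mp this |>.resolve_left hk0)
    refine ⟨n+1, x, ?_, hxb, hinj⟩
    -- bound : n+1 ≤ 1000 * (1 + min n (n L'/ℓ))
    have hminn : min ((n:ℝ)) ((n:ℝ) * Real.log (2*(k:ℝ)+1) / Real.log n) = (n:ℝ) := by
      apply min_eq_left
      have hle : Real.log (n:ℝ) ≤ Real.log (2*(k:ℝ)+1) := by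
        apply Real.log_le_log (by linarith)
        have : (n:ℝ) ≤ 2*(k:ℝ)+1 := by exact_mod_cast hcase
        linarith
      rw [le_div_iff₀ hlpos]
      have hn0 : (0:ℝ) ≤ (n:ℝ) := by linarith
      exact mul_le_mul_of_nonneg_left hle hn0
    rw [hminn]
    push_cast
    linarith
  · -- probabilistic scheme
    push_neg at hcase
    have hkn : 2*k+1 ≤ n := by omega
    set s0 := ⌈(200:ℝ) * n * Real.log (4*(k:ℝ)+1) / Real.log n⌉₊ with hs0def
    have hargpos : (0:ℝ) ≤ (200:ℝ) * n * Real.log (4*(k:ℝ)+1) / Real.log n := by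
      have : (0:ℝ) < Real.log (4*(k:ℝ)+1) := Real.log_pos (by linarith)
      positivity
    have hs0 : (200:ℝ) * n * Real.log (4*(k:ℝ)+1) / Real.log n ≤ (s0:ℝ) := Nat.le_ceil _
    obtain ⟨X, hXgood⟩ := exists_good n k s0 hn
      (fun m hm1 hmn => arith n k m s0 hn hk hkn hm1 hmn hs0)
    obtain ⟨x, hxb, hinj⟩ := glue n s0 k hk (fun j i => if X j i then 1 else 0)
      (by
        intro j i
        have hk1 : (1:ℤ) ≤ (k:ℤ) := by exact_mod_cast hk
        by_cases h : X j i <;> simp [h] <;> omega)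
      (by
        intro z hzb hzsum
        by_contra hz0
        obtain ⟨j, hj⟩ := hXgood z hzb hz0
        apply hj
        have : (∑ i, (if X j i then (1:ℤ) else 0) * z i)
            = ∑ i, (if X j i then z i else 0) := by
          apply Finset.sum_congr rfl
          intro i _
          by_cases h : X j i <;> simp [h]
        rw [← this]
        exact hzsum j)
    refine ⟨s0+1, x, ?_, hxb, hinj⟩
    -- the size bound
    have hminr : min ((n:ℝ)) ((n:ℝ) * Real.log (2*(k:ℝ)+1) / Real.log n)
        = (n:ℝ) * Real.log (2*(k:ℝ)+1) / Real.log n := by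
      apply min_eq_right
      rw [div_le_iff₀ hlpos]
      have hle : Real.log (2*(k:ℝ)+1) ≤ Real.log (n:ℝ) := by
        apply Real.log_le_log (by linarith)
        have : (2*k+1 : ℝ) ≤ (n:ℝ) := by exact_mod_cast hkn
        linarith
      have hn0 : (0:ℝ) ≤ (n:ℝ) := by linarith
      exact mul_le_mul_of_nonneg_left hle hn0
    rw [hminr]
    have hceil : (s0:ℝ) ≤ (200:ℝ) * n * Real.log (4*(k:ℝ)+1) / Real.log n + 1 := by
      rw [hs0def]
      exact le_of_lt (Nat.ceil_lt_add_one hargpos)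
    have hL2L' : Real.log (4*(k:ℝ)+1) ≤ 2 * Real.log (2*(k:ℝ)+1) := by
      have h1 : (4*(k:ℝ)+1) ≤ (2*(k:ℝ)+1)^2 := by nlinarith
      calc Real.log (4*(k:ℝ)+1) ≤ Real.log ((2*(k:ℝ)+1)^2) :=
          Real.log_le_log (by linarith) h1
        _ = 2 * Real.log (2*(k:ℝ)+1) := by
            rw [Real.log_pow]
            push_cast
            ring
    have hbound : (200:ℝ) * n * Real.log (4*(k:ℝ)+1) / Real.log n
        ≤ 400 * ((n:ℝ) * Real.log (2*(k:ℝ)+1) / Real.log n) := by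
      rw [show (400:ℝ) * ((n:ℝ) * Real.log (2*(k:ℝ)+1) / Real.log n)
          = (400 * ((n:ℝ) * Real.log (2*(k:ℝ)+1))) / Real.log n by ring]
      rw [div_le_div_iff_of_pos_right hlpos]
      have := mul_le_mul_of_nonneg_left hL2L' (by positivity : (0:ℝ) ≤ 200 * (n:ℝ))
      linarith
    have hminpos : (0:ℝ) ≤ (n:ℝ) * Real.log (2*(k:ℝ)+1) / Real.log n := by positivity
    push_cast
    linarith
end

section
/- For all integers n ≥ 1 and k ≥ 1, the map from {−k,−k+1,…,k−1,k}^n to ℝ^{2n} sending y to the tuple of 2n values (‖k·e_i − y‖_∞, ‖−k·e_i − y‖_∞) for i = 1,…,n (where e_i is the i-th standard basis vector of ℤ^n) is injective. Consequently 2n nonadaptive ℓ∞ distance queries suffice to determine any hidden vector y ∈ {−k,…,k}^n exactly. -/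
lemma mm_sup_eq {n k : ℕ} (y : Fin n → ℤ) (hy : ∀ j, (y j).natAbs ≤ k)
    (i : Fin n) (c : ℤ) (hc : k ≤ (c - y i).natAbs) :
    (Finset.univ.sup fun j : Fin n => ((if j = i then c else 0) - y j).natAbs)
      = (c - y i).natAbs := by
  apply le_antisymm
  · apply Finset.sup_le
    intro j _
    by_cases h : j = i
    · simp [h]
    · simpa [h] using le_trans (hy j) hc
  · have := Finset.le_sup (f := fun j : Fin n =>
      ((if j = i then c else 0) - y j).natAbs) (Finset.mem_univ i)
    simpa using this

lemma mm_sup_le {n k : ℕ} (y : Fin n → ℤ) (hy : ∀ j, (y j).natAbs ≤ k)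
    (i : Fin n) (c : ℤ) (hc : (c - y i).natAbs ≤ k) :
    (Finset.univ.sup fun j : Fin n => ((if j = i then c else 0) - y j).natAbs) ≤ k := by
  apply Finset.sup_le
  intro j _
  by_cases h : j = i
  · simpa [h] using hc
  · simpa [h] using hy j

/-- ℓ∞-query Mastermind: the `2n` nonadaptive queries `k·e_i` and `-k·e_i` (for `i = 1,…,n`)
determine any hidden vector `y ∈ {-k,…,k}^n` exactly; i.e. the answer map
`y ↦ (‖k·e_i − y‖_∞, ‖−k·e_i − y‖_∞)_{i}` is injective on the box.
Here the ℓ∞ norm of an integer vector `v` is `sup_i |v_i|`, computed via `natAbs`. -/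
theorem mastermind_linfty_upper (n k : ℕ) (hn : 1 ≤ n) (hk : 1 ≤ k) :
    Set.InjOn
      (fun y : Fin n → ℤ => fun q : Fin n × Bool =>
        Finset.univ.sup fun j : Fin n =>
          ((if j = q.1 then (if q.2 then (k : ℤ) else -(k : ℤ)) else 0) - y j).natAbs)
      {y : Fin n → ℤ | ∀ i, |y i| ≤ (k : ℤ)} := by
  intro y hy y' hy' h
  have hy1 : ∀ j, (y j).natAbs ≤ k := by
    intro j; have := abs_le.mp (hy j); omega
  have hy1' : ∀ j, (y' j).natAbs ≤ k := by
    intro j; have := abs_le.mp (hy' j); omega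
  funext i
  have hA := congrFun h (i, true)
  have hB := congrFun h (i, false)
  simp only [if_true, Bool.false_eq_true, if_false] at hA hB
  rcases le_or_gt 0 (y i) with hp | hn1 <;> rcases le_or_gt 0 (y' i) with hp' | hn1'
  · -- both nonneg: use B
    rw [mm_sup_eq y hy1 i (-(k : ℤ)) (by have := abs_le.mp (hy i); omega),
        mm_sup_eq y' hy1' i (-(k : ℤ)) (by have := abs_le.mp (hy' i); omega)] at hB
    have := abs_le.mp (hy i); have := abs_le.mp (hy' i); omega
  · -- y i ≥ 0, y' i < 0
    rw [mm_sup_eq y hy1 i (-(k : ℤ)) (by have := abs_le.mp (hy i); omega)] at hB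
    have h2 := mm_sup_le y' hy1' i (-(k : ℤ)) (by have := abs_le.mp (hy' i); omega)
    rw [← hB] at h2
    rw [mm_sup_eq y' hy1' i ((k : ℤ)) (by have := abs_le.mp (hy' i); omega)] at hA
    have h3 := mm_sup_le y hy1 i ((k : ℤ)) (by have := abs_le.mp (hy i); omega)
    rw [hA] at h3
    have := abs_le.mp (hy i); have := abs_le.mp (hy' i); omega
  · -- y i < 0, y' i ≥ 0
    rw [mm_sup_eq y' hy1' i (-(k : ℤ)) (by have := abs_le.mp (hy' i); omega)] at hB
    have h2 := mm_sup_le y hy1 i (-(k : ℤ)) (by have := abs_le.mp (hy i); omega)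
    rw [hB] at h2
    rw [mm_sup_eq y hy1 i ((k : ℤ)) (by have := abs_le.mp (hy i); omega)] at hA
    have h3 := mm_sup_le y' hy1' i ((k : ℤ)) (by have := abs_le.mp (hy' i); omega)
    rw [← hA] at h3
    have := abs_le.mp (hy i); have := abs_le.mp (hy' i); omega
  · -- both neg: use A
    rw [mm_sup_eq y hy1 i ((k : ℤ)) (by have := abs_le.mp (hy i); omega),
        mm_sup_eq y' hy1' i ((k : ℤ)) (by have := abs_le.mp (hy' i); omega)] at hA
    have := abs_le.mp (hy i); have := abs_le.mp (hy' i); omega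
end

section
/- There is an absolute constant c > 0 such that the following holds for all integers n ≥ 1, k ≥ 2 and all real R with 1 ≤ R ≤ k. Consider any deterministic adaptive query strategy with s queries: for j = 1,…,s the j-th query q_j ∈ {−k,…,k}^n is an arbitrary function of the previous answers, where for a hidden vector y ∈ {−k,…,k}^n the answers are defined recursively by a_j(y) = ‖y − q_j(a₁(y),…,a_{j−1}(y))‖_∞, and the output y′ ∈ {−k,…,k}^n is an arbitrary function of (a₁(y),…,a_s(y)). If for every y ∈ {−k,−k+1,…,k−1,k}^n the output satisfies ‖y′ − y‖_∞ ≤ R, then s ≥ c · n·log(k/R)/log(2k+1). -/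
/-- Adaptive lower bound for approximate Mastermind with ℓ∞ queries. Queries are
chosen adaptively from `{-k,…,k}^n`; the answer to query `x` on hidden vector `y` is
`‖y − x‖_∞ = maxᵢ |yᵢ − xᵢ|` (a natural number, computed via `natAbs` and `Finset.sup`).
If the output is always within ℓ∞ distance `R` of the hidden vector, then
`s ≥ c·n·log(k/R)/log(2k+1)`. -/
theorem mastermind_linfty_adaptive_lower :
    ∃ c : ℝ, 0 < c ∧
    ∀ (n k : ℕ) (R : ℝ), 1 ≤ n → 2 ≤ k → 1 ≤ R → R ≤ (k : ℝ) →
    ∀ (s : ℕ)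
      (q : (j : Fin s) → (Fin (j : ℕ) → ℕ) → (Fin n → ℤ))
      (out : (Fin s → ℕ) → (Fin n → ℤ))
      (a : (Fin n → ℤ) → Fin s → ℕ),
    (∀ j prev i, |q j prev i| ≤ (k : ℤ)) →
    (∀ ans i, |out ans i| ≤ (k : ℤ)) →
    (∀ y : Fin n → ℤ, (∀ i, |y i| ≤ (k : ℤ)) → ∀ j : Fin s,
      a y j = Finset.univ.sup fun i : Fin n =>
        (y i - (q j (fun m : Fin (j : ℕ) => a y ⟨(m : ℕ), m.isLt.trans j.isLt⟩)) i).natAbs) →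
    (∀ y : Fin n → ℤ, (∀ i, |y i| ≤ (k : ℤ)) →
      ((Finset.univ.sup fun i : Fin n => (y i - (out (a y)) i).natAbs : ℕ) : ℝ) ≤ R) →
    c * (n : ℝ) * Real.log ((k : ℝ) / R) / Real.log (2 * (k : ℝ) + 1) ≤ (s : ℝ) := by
  refine ⟨1/2, by norm_num, ?_⟩
  intro n k R hn hk hR1 hRk s q out a hq hout h_a h_out
  have hR0 : (0:ℝ) < R := lt_of_lt_of_le one_pos hR1
  have hk0 : (0:ℝ) < (k:ℝ) := by
    have : (2:ℝ) ≤ (k:ℝ) := by exact_mod_cast hk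
    linarith
  -- grid spacing and size
  set d : ℕ := ⌊2*R⌋₊ + 1 with hd
  set m : ℕ := (2*k)/d + 1 with hm
  have hdpos : 0 < d := Nat.succ_pos _
  have hd_gt : 2*R < (d:ℝ) := by
    have := Nat.lt_floor_add_one (2*R)
    push_cast [hd]
    linarith
  have hd_le : (d:ℝ) ≤ 3*R := by
    have h1 : (⌊2*R⌋₊ : ℝ) ≤ 2*R := Nat.floor_le (by positivity)
    push_cast [hd]
    linarith
  have hdm : d * (m-1) ≤ 2*k := by
    simp only [hm, Nat.add_sub_cancel]
    rw [mul_comm]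
    exact Nat.div_mul_le_self _ _
  -- the grid map
  set φ : (Fin n → Fin m) → (Fin n → ℤ) := fun v i => (d:ℤ) * (v i : ℕ) - k with hφ
  have hφ_bd : ∀ v : Fin n → Fin m, ∀ i, |φ v i| ≤ (k : ℤ) := by
    intro v i
    have h1 : (v i : ℕ) ≤ m - 1 := Nat.le_sub_one_of_lt (v i).isLt
    have h2 : d * (v i : ℕ) ≤ 2*k := le_trans (Nat.mul_le_mul_left d h1) hdm
    have h3 : ((d:ℤ) * (v i : ℕ)) ≤ 2*k := by exact_mod_cast h2
    have h4 : (0:ℤ) ≤ (d:ℤ) * (v i : ℕ) := by positivity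
    rw [abs_le]
    constructor <;> simp only [hφ] <;> omega
  -- answers are at most 2k
  have ha_bd : ∀ v : Fin n → Fin m, ∀ j, a (φ v) j < 2*k + 1 := by
    intro v j
    rw [h_a (φ v) (hφ_bd v) j]
    have : ∀ i ∈ (Finset.univ : Finset (Fin n)),
        ((φ v) i - (q j (fun m : Fin (j : ℕ) =>
          a (φ v) ⟨(m : ℕ), m.isLt.trans j.isLt⟩)) i).natAbs ≤ 2*k := by
      intro i _
      have h1 := hφ_bd v i
      have h2 := hq j (fun m : Fin (j : ℕ) => a (φ v) ⟨(m : ℕ), m.isLt.trans j.isLt⟩) i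
      rw [abs_le] at h1 h2
      omega
    have := Finset.sup_le this
    omega
  -- the map to answer vectors is injective
  set F : (Fin n → Fin m) → (Fin s → Fin (2*k+1)) :=
    fun v j => ⟨a (φ v) j, ha_bd v j⟩ with hF
  have hinj : Function.Injective F := by
    intro v w hvw
    have haeq : a (φ v) = a (φ w) := by
      funext j
      have := congrFun hvw j
      exact congrArg Fin.val this
    by_contra hne
    have : ∃ i, v i ≠ w i := by
      by_contra h
      push_neg at h
      exact hne (funext h)
    obtain ⟨i, hi⟩ := this
    set z : Fin n → ℤ := out (a (φ v)) with hz
    have hbv : (((φ v) i - z i).natAbs : ℝ) ≤ R := by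
      refine le_trans ?_ (h_out (φ v) (hφ_bd v))
      simp only [hz]
      exact Nat.cast_le.mpr (Finset.le_sup (f := fun i' => ((φ v) i' - out (a (φ v)) i').natAbs)
        (Finset.mem_univ i))
    have hbw : (((φ w) i - z i).natAbs : ℝ) ≤ R := by
      refine le_trans ?_ (h_out (φ w) (hφ_bd w))
      have : z = out (a (φ w)) := by rw [hz, haeq]
      rw [this]
      exact Nat.cast_le.mpr (Finset.le_sup (f := fun i' => ((φ w) i' - out (a (φ w)) i').natAbs)
        (Finset.mem_univ i))
    -- triangle inequality
    have htri : ((φ v) i - (φ w) i).natAbs ≤ ((φ v) i - z i).natAbs + ((φ w) i - z i).natAbs := by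
      omega
    have htriR : (((φ v) i - (φ w) i).natAbs : ℝ) ≤ 2*R := by
      calc (((φ v) i - (φ w) i).natAbs : ℝ)
          ≤ (((φ v) i - z i).natAbs : ℝ) + (((φ w) i - z i).natAbs : ℝ) := by exact_mod_cast htri
        _ ≤ R + R := add_le_add hbv hbw
        _ = 2*R := by ring
    -- but grid points differ by at least d
    have hdiff : (φ v) i - (φ w) i = (d:ℤ) * ((v i : ℕ) - (w i : ℕ)) := by
      simp only [hφ]; ring
    have hge : d ≤ ((φ v) i - (φ w) i).natAbs := by
      rw [hdiff]
      have hne' : ((v i : ℕ) : ℤ) ≠ ((w i : ℕ) : ℤ) := by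
        intro h
        exact hi (Fin.ext (by exact_mod_cast h))
      have : 1 ≤ (((v i : ℕ) : ℤ) - ((w i : ℕ) : ℤ)).natAbs := by omega
      calc d = d * 1 := (mul_one d).symm
        _ ≤ d * (((v i : ℕ) : ℤ) - ((w i : ℕ) : ℤ)).natAbs := Nat.mul_le_mul_left d this
        _ = ((d:ℤ) * (((v i : ℕ) : ℤ) - ((w i : ℕ) : ℤ))).natAbs := by
            rw [Int.natAbs_mul]; simp
    have : (d:ℝ) ≤ 2*R := le_trans (by exact_mod_cast Nat.cast_le.mpr hge) htriR
    linarith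
  -- counting
  have hcard : m^n ≤ (2*k+1)^s := by
    have := Fintype.card_le_of_injective F hinj
    simpa [Fintype.card_fun] using this
  have hm1 : 1 ≤ m := Nat.le_add_left _ _
  have hlogk : 0 < Real.log (2*(k:ℝ)+1) := by
    apply Real.log_pos
    linarith
  have hlog : (n:ℝ) * Real.log m ≤ (s:ℝ) * Real.log (2*(k:ℝ)+1) := by
    have h1 : ((m:ℝ))^n ≤ ((2*(k:ℝ)+1))^s := by
      have : ((m^n : ℕ) : ℝ) ≤ (((2*k+1)^s : ℕ) : ℝ) := by exact_mod_cast hcard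
      push_cast at this
      convert this using 2
    have h2 := Real.log_le_log (by positivity) h1
    rwa [Real.log_pow, Real.log_pow] at h2
  -- key: (1/2) log(k/R) ≤ log m
  have key : (1/2) * Real.log ((k:ℝ)/R) ≤ Real.log m := by
    have h2km : 2*k < d*m := by
      have h1 := Nat.div_add_mod (2*k) d
      have h2 := Nat.mod_lt (2*k) hdpos
      calc 2*k = d*((2*k)/d) + (2*k)%d := h1.symm
        _ < d*((2*k)/d) + d := by omega
        _ = d*m := by rw [hm]; ring
    rcases le_or_gt (9*R) (4*(k:ℝ)) with hcase | hcase
    · -- k/R ≥ 9/4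
      have hmR : (2*(k:ℝ))/(3*R) ≤ (m:ℝ) := by
        have h1 : (2*(k:ℝ)) < (d:ℝ)*(m:ℝ) := by exact_mod_cast h2km
        have h2 : (d:ℝ)*(m:ℝ) ≤ 3*R*(m:ℝ) := by
          apply mul_le_mul_of_nonneg_right hd_le
          positivity
        rw [div_le_iff₀ (by positivity)]
        nlinarith
      have hlogm : Real.log ((2*(k:ℝ))/(3*R)) ≤ Real.log m :=
        Real.log_le_log (by positivity) hmR
      have hsplit : Real.log ((2*(k:ℝ))/(3*R)) = Real.log (2/3) + Real.log ((k:ℝ)/R) := by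
        rw [← Real.log_mul (by norm_num) (by positivity)]
        congr 1
        rw [div_mul_div_comm]
      have h94 : Real.log (9/4 : ℝ) ≤ Real.log ((k:ℝ)/R) := by
        apply Real.log_le_log (by norm_num)
        rw [le_div_iff₀ hR0]
        linarith
      have h94' : Real.log (9/4 : ℝ) = -(2 * Real.log (2/3 : ℝ)) := by
        rw [show (9/4 : ℝ) = ((2:ℝ)/3)⁻¹^2 by norm_num, Real.log_pow, Real.log_inv]
        push_cast
        ring
      rw [hsplit] at hlogm
      linarith
    · -- k/R < 9/4
      rcases eq_or_lt_of_le hRk with hRk' | hRk'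
      · -- R = k
        rw [← hRk', div_self (ne_of_gt hR0), Real.log_one]
        simp only [mul_zero]
        exact Real.log_nonneg (by exact_mod_cast hm1)
      · -- R < k : m ≥ 2
        have hdk : d ≤ 2*k := by
          have : ⌊2*R⌋₊ < 2*k := by
            rw [Nat.floor_lt (by positivity)]
            push_cast
            linarith
          omega
        have hm2 : 2 ≤ m := by
          have : 1 ≤ (2*k)/d := (Nat.one_le_div_iff hdpos).mpr hdk
          omega
        have hlogm : Real.log 2 ≤ Real.log m := by
          apply Real.log_le_log (by norm_num)
          exact_mod_cast hm2
        have hkR : (k:ℝ)/R ≤ 9/4 := by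
          rw [div_le_iff₀ hR0]
          linarith
        have h1 : Real.log ((k:ℝ)/R) ≤ Real.log (9/4 : ℝ) := by
          apply Real.log_le_log (by positivity) hkR
        have h2 : Real.log (9/4 : ℝ) = 2 * Real.log (3/2 : ℝ) := by
          rw [show (9/4 : ℝ) = ((3:ℝ)/2)^2 by norm_num, Real.log_pow]
          push_cast; ring
        have h3 : Real.log (3/2 : ℝ) ≤ Real.log 2 := by
          apply Real.log_le_log (by norm_num) (by norm_num)
        linarith
  -- conclude
  rw [div_le_iff₀ hlogk]
  have hn0 : (0:ℝ) ≤ (n:ℝ) := Nat.cast_nonneg n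
  have := mul_le_mul_of_nonneg_left key hn0
  nlinarith
end

section
/- Fix an integer p ≥ 1. There is a constant c_p > 0 depending only on p such that for all integers n ≥ 1, k ≥ 1 and every ε ∈ (0,1), the following holds. For any finite set Q ⊆ {−k,−k+1,…,k−1,k}^n of query vectors with |Q| ≤ (1/200)·exp(c_p·ε²·n), the number of vectors y ∈ {−k,−k+1,…,k−1,k}^n satisfying |‖x − y‖_p^p − μ_x| ≤ ε·μ_x simultaneously for every x ∈ Q, where μ_x denotes the average of ‖x − z‖_p^p over z ∈ {−k,…,k}^n, is at least (99/100)·(2k+1)^n. (Hence a codemaker answering every query x by the fixed value μ_x^{1/p}, independent of y, gives answers consistent with a 99/100 fraction of all hidden vectors, so no algorithm making fewer than exp(c_p ε² n)/200 (1±ε)-noisy ℓ_p queries can succeed with probability 2/3.) -/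
set_option maxHeartbeats 1000000
open Finset Real

lemma exp_convex_bound (B t u : ℝ) (hB : 0 < B) (hu : |u| ≤ B) :
    Real.exp (t * u) ≤ ((B - u) / (2 * B)) * Real.exp (-(t * B)) +
      ((B + u) / (2 * B)) * Real.exp (t * B) := by
  have h := abs_le.1 hu
  have hB' : (0:ℝ) < 2 * B := by linarith
  have hBne : (2 * B) ≠ 0 := ne_of_gt hB'
  have ha : 0 ≤ (B - u) / (2 * B) := by apply div_nonneg <;> linarith
  have hb : 0 ≤ (B + u) / (2 * B) := by apply div_nonneg <;> linarith
  have hab : (B - u) / (2 * B) + (B + u) / (2 * B) = 1 := by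
    field_simp; ring
  have := convexOn_exp.2 (Set.mem_univ (-(t * B))) (Set.mem_univ (t * B)) ha hb hab
  simp only [smul_eq_mul] at this
  have harg : (B - u) / (2 * B) * (-(t * B)) + (B + u) / (2 * B) * (t * B) = t * u := by
    rw [div_mul_eq_mul_div, div_mul_eq_mul_div, ← add_div, eq_comm,
      eq_div_iff hBne]
    ring
  rw [harg] at this
  exact this

lemma mgf_avg (T : Finset ℤ) (hT : T.Nonempty) (f : ℤ → ℝ) (B t : ℝ) (hB : 0 < B)
    (hf : ∀ z ∈ T, 0 ≤ f z ∧ f z ≤ B) :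
    ∑ z ∈ T, Real.exp (t * (f z - (∑ w ∈ T, f w) / T.card)) ≤
      (T.card : ℝ) * Real.exp (t ^ 2 * B ^ 2 / 2) := by
  set m : ℝ := (∑ w ∈ T, f w) / T.card with hm
  have hcard : (0:ℝ) < T.card := by exact_mod_cast hT.card_pos
  have hm0 : 0 ≤ m := by
    apply div_nonneg _ hcard.le
    exact Finset.sum_nonneg fun z hz => (hf z hz).1
  have hmB : m ≤ B := by
    rw [hm, div_le_iff₀ hcard]
    calc ∑ w ∈ T, f w ≤ ∑ w ∈ T, B := Finset.sum_le_sum fun z hz => (hf z hz).2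
    _ = B * T.card := by rw [Finset.sum_const, nsmul_eq_mul]; ring
  have hsum0 : ∑ z ∈ T, (f z - m) = 0 := by
    rw [Finset.sum_sub_distrib, Finset.sum_const, nsmul_eq_mul, hm,
      mul_div_cancel₀ _ (ne_of_gt hcard), sub_self]
  have step1 : ∑ z ∈ T, Real.exp (t * (f z - m)) ≤
      ∑ z ∈ T, (((B - (f z - m)) / (2 * B)) * Real.exp (-(t * B)) +
        ((B + (f z - m)) / (2 * B)) * Real.exp (t * B)) := by
    apply Finset.sum_le_sum
    intro z hz
    apply exp_convex_bound B t _ hB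
    have := hf z hz
    rw [abs_le]; constructor <;> linarith [this.1, this.2]
  have step2 : ∑ z ∈ T, (((B - (f z - m)) / (2 * B)) * Real.exp (-(t * B)) +
        ((B + (f z - m)) / (2 * B)) * Real.exp (t * B)) =
      (T.card : ℝ) * Real.cosh (t * B) := by
    rw [Finset.sum_add_distrib]
    rw [← Finset.sum_mul, ← Finset.sum_mul, ← Finset.sum_div, ← Finset.sum_div]
    have e1 : ∑ z ∈ T, (B - (f z - m)) = T.card * B := by
      rw [Finset.sum_sub_distrib, hsum0, Finset.sum_const, nsmul_eq_mul]; ring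
    have e2 : ∑ z ∈ T, (B + (f z - m)) = T.card * B := by
      rw [Finset.sum_add_distrib, hsum0, Finset.sum_const, nsmul_eq_mul]; ring
    rw [e1, e2, Real.cosh_eq]
    field_simp
    ring
  have step3 : Real.cosh (t * B) ≤ Real.exp (t ^ 2 * B ^ 2 / 2) := by
    have := Real.cosh_le_exp_half_sq (t * B)
    have e : (t * B) ^ 2 / 2 = t ^ 2 * B ^ 2 / 2 := by ring
    rwa [e] at this
  calc ∑ z ∈ T, Real.exp (t * (f z - m)) ≤ (T.card : ℝ) * Real.cosh (t * B) := by
        rw [← step2]; exact step1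
  _ ≤ (T.card : ℝ) * Real.exp (t ^ 2 * B ^ 2 / 2) := by
        apply mul_le_mul_of_nonneg_left step3 hcard.le

lemma sum_box_coord {n : ℕ} (T : Finset ℤ) (g : ℤ → ℝ) (i : Fin n) :
    ∑ z ∈ Fintype.piFinset (fun _ : Fin n => T), g (z i) =
      (T.card : ℝ) ^ (n - 1) * ∑ w ∈ T, g w := by
  have key : ∀ z : Fin n → ℤ, g (z i) = ∏ j, (if i = j then g (z j) else 1) := by
    intro z
    rw [Finset.prod_ite_eq]
    simp
  calc ∑ z ∈ Fintype.piFinset (fun _ : Fin n => T), g (z i)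
      = ∑ z ∈ Fintype.piFinset (fun _ : Fin n => T), ∏ j, (if i = j then g (z j) else 1) := by
        exact Finset.sum_congr rfl fun z _ => key z
    _ = ∏ j, ∑ w ∈ T, (if i = j then g w else 1) :=
        Finset.sum_prod_piFinset T (fun j w => if i = j then g w else 1)
    _ = (T.card : ℝ) ^ (n - 1) * ∑ w ∈ T, g w := by
        rw [← Finset.mul_prod_erase Finset.univ _ (Finset.mem_univ i)]
        have h1 : (∑ w ∈ T, if i = i then g w else 1) = ∑ w ∈ T, g w := by simp
        have h2 : (∏ j ∈ Finset.univ.erase i, ∑ w ∈ T, if i = j then g w else 1)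
            = (T.card : ℝ) ^ (n - 1) := by
          have he : ∀ j ∈ Finset.univ.erase i,
              (∑ w ∈ T, if i = j then g w else 1) = (T.card : ℝ) := by
            intro j hj
            simp [Ne.symm (Finset.ne_of_mem_erase hj)]
          rw [Finset.prod_congr rfl he, Finset.prod_const,
            Finset.card_erase_of_mem (Finset.mem_univ i), Finset.card_univ, Fintype.card_fin]
        rw [h1, h2, mul_comm]

lemma chernoff_box {n : ℕ} (hn : 1 ≤ n) (T : Finset ℤ) (hT : T.Nonempty)
    (f : Fin n → ℤ → ℝ) (B : ℝ) (hB : 0 < B)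
    (hf : ∀ i, ∀ z ∈ T, 0 ≤ f i z ∧ f i z ≤ B) (s : ℝ) (hs : 0 < s) :
    (((Fintype.piFinset (fun _ : Fin n => T)).filter
        (fun z => s ≤ (∑ i, f i (z i)) - ∑ i, (∑ w ∈ T, f i w) / T.card)).card : ℝ) ≤
      Real.exp (-(s ^ 2) / (2 * n * B ^ 2)) * (T.card : ℝ) ^ n := by
  set m : Fin n → ℝ := fun i => (∑ w ∈ T, f i w) / T.card with hm
  set t0 : ℝ := s / (n * B ^ 2) with ht0def
  have hn0 : (0:ℝ) < n := by exact_mod_cast hn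
  have ht0 : 0 < t0 := by positivity
  set box := Fintype.piFinset (fun _ : Fin n => T) with hbox
  set Bad := box.filter (fun z => s ≤ (∑ i, f i (z i)) - ∑ i, m i) with hBad
  have step1 : (Bad.card : ℝ) ≤
      ∑ z ∈ box, Real.exp (t0 * ((∑ i, f i (z i)) - (∑ i, m i) - s)) := by
    calc (Bad.card : ℝ) = ∑ _z ∈ Bad, (1:ℝ) := by simp
    _ ≤ ∑ z ∈ Bad, Real.exp (t0 * ((∑ i, f i (z i)) - (∑ i, m i) - s)) := by
        apply Finset.sum_le_sum
        intro z hz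
        rw [hBad, Finset.mem_filter] at hz
        rw [show (1:ℝ) = Real.exp 0 by simp]
        apply Real.exp_le_exp.2
        have := hz.2
        nlinarith
    _ ≤ ∑ z ∈ box, Real.exp (t0 * ((∑ i, f i (z i)) - (∑ i, m i) - s)) := by
        apply Finset.sum_le_sum_of_subset_of_nonneg (Finset.filter_subset _ _)
        intro z _ _
        positivity
  have pointwise : ∀ z : Fin n → ℤ,
      Real.exp (t0 * ((∑ i, f i (z i)) - (∑ i, m i) - s)) =
        Real.exp (-(t0 * s)) * ∏ i, Real.exp (t0 * (f i (z i) - m i)) := by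
    intro z
    rw [← Real.exp_sum, ← Real.exp_add]
    congr 1
    rw [← Finset.mul_sum, ← Finset.sum_sub_distrib]
    ring
  have step2 : ∑ z ∈ box, Real.exp (t0 * ((∑ i, f i (z i)) - (∑ i, m i) - s)) =
      Real.exp (-(t0 * s)) * ∏ i, ∑ w ∈ T, Real.exp (t0 * (f i w - m i)) := by
    rw [Finset.sum_congr rfl (fun z _ => pointwise z), ← Finset.mul_sum,
      Finset.sum_prod_piFinset T (fun i w => Real.exp (t0 * (f i w - m i)))]
  have step3 : ∏ i, ∑ w ∈ T, Real.exp (t0 * (f i w - m i)) ≤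
      ((T.card : ℝ) * Real.exp (t0 ^ 2 * B ^ 2 / 2)) ^ n := by
    calc ∏ i, ∑ w ∈ T, Real.exp (t0 * (f i w - m i))
        ≤ ∏ _i : Fin n, ((T.card : ℝ) * Real.exp (t0 ^ 2 * B ^ 2 / 2)) := by
          apply Finset.prod_le_prod
          · intro i _
            apply Finset.sum_nonneg
            intro w _
            positivity
          · intro i _
            exact mgf_avg T hT (f i) B t0 hB (hf i)
    _ = ((T.card : ℝ) * Real.exp (t0 ^ 2 * B ^ 2 / 2)) ^ n := by
          rw [Finset.prod_const, Finset.card_univ, Fintype.card_fin]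
  have expid : Real.exp (-(t0 * s)) * ((T.card : ℝ) * Real.exp (t0 ^ 2 * B ^ 2 / 2)) ^ n =
      Real.exp (-(s ^ 2) / (2 * n * B ^ 2)) * (T.card : ℝ) ^ n := by
    rw [mul_pow, ← Real.exp_nat_mul, mul_comm ((T.card:ℝ)^n) _, ← mul_assoc, ← Real.exp_add]
    rw [mul_assoc]
    congr 2
    rw [ht0def]
    field_simp
    ring
  calc (Bad.card : ℝ) ≤ Real.exp (-(t0 * s)) * ∏ i, ∑ w ∈ T, Real.exp (t0 * (f i w - m i)) := by
        rw [← step2]; exact step1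
  _ ≤ Real.exp (-(t0 * s)) * ((T.card : ℝ) * Real.exp (t0 ^ 2 * B ^ 2 / 2)) ^ n := by
        apply mul_le_mul_of_nonneg_left step3 (Real.exp_pos _).le
  _ = _ := expid

lemma sum_abs_pow_lb (p k : ℕ) (hk : 1 ≤ k) (x : ℤ) (hx : |x| ≤ (k:ℤ)) :
    ((k:ℝ)/2) * ((k:ℝ)/2) ^ p ≤ ∑ w ∈ Finset.Icc (-(k:ℤ)) (k:ℤ), |(x:ℝ) - (w:ℝ)| ^ p := by
  have hx' := abs_le.1 hx
  set m : ℕ := (k+1)/2 with hmdef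
  have hmk : m ≤ k := by omega
  have h2m : k ≤ 2 * m := by omega
  have hhalf : (k:ℝ)/2 ≤ (m:ℝ) := by
    have : (k:ℝ) ≤ 2 * m := by exact_mod_cast h2m
    linarith
  have hhalf0 : (0:ℝ) ≤ (k:ℝ)/2 := by positivity
  -- generic: a subset S' of the Icc where all distances are ≥ k/2 and card ≥ k/2
  have main : ∀ S' : Finset ℤ, S' ⊆ Finset.Icc (-(k:ℤ)) (k:ℤ) →
      ((k:ℝ)/2 ≤ (S'.card : ℝ)) → (∀ w ∈ S', (k:ℝ)/2 ≤ |(x:ℝ) - (w:ℝ)|) →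
      ((k:ℝ)/2) * ((k:ℝ)/2) ^ p ≤ ∑ w ∈ Finset.Icc (-(k:ℤ)) (k:ℤ), |(x:ℝ) - (w:ℝ)| ^ p := by
    intro S' hsub hcard hdist
    calc ((k:ℝ)/2) * ((k:ℝ)/2) ^ p ≤ (S'.card : ℝ) * ((k:ℝ)/2) ^ p := by
          apply mul_le_mul_of_nonneg_right hcard (by positivity)
    _ ≤ ∑ w ∈ S', |(x:ℝ) - (w:ℝ)| ^ p := by
          rw [← nsmul_eq_mul]
          apply Finset.card_nsmul_le_sum
          intro w hw
          exact pow_le_pow_left₀ hhalf0 (hdist w hw) p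
    _ ≤ ∑ w ∈ Finset.Icc (-(k:ℤ)) (k:ℤ), |(x:ℝ) - (w:ℝ)| ^ p := by
          apply Finset.sum_le_sum_of_subset_of_nonneg hsub
          intro w _ _
          positivity
  rcases le_or_gt 0 x with hx0 | hx0
  · apply main (Finset.Icc (-(k:ℤ)) (-(m:ℤ)))
    · exact Finset.Icc_subset_Icc le_rfl (by omega)
    · rw [Int.card_Icc]
      have : ((-(m:ℤ)) + 1 - (-(k:ℤ))).toNat = k - m + 1 := by omega
      rw [this]
      have : (k:ℝ) ≤ 2 * ((k - m + 1 : ℕ) : ℝ) := by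
        have : k ≤ 2 * (k - m + 1) := by omega
        exact_mod_cast this
      linarith
    · intro w hw
      rw [Finset.mem_Icc] at hw
      have h1 : (m:ℤ) ≤ x - w := by omega
      have h2 : ((m:ℝ)) ≤ (x:ℝ) - (w:ℝ)  := by exact_mod_cast h1
      rw [abs_of_nonneg (by linarith)]
      linarith
  · apply main (Finset.Icc ((m:ℤ)) (k:ℤ))
    · exact Finset.Icc_subset_Icc (by omega) le_rfl
    · rw [Int.card_Icc]
      have : ((k:ℤ) + 1 - (m:ℤ)).toNat = k - m + 1 := by omega
      rw [this]
      have : (k:ℝ) ≤ 2 * ((k - m + 1 : ℕ) : ℝ) := by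
        have : k ≤ 2 * (k - m + 1) := by omega
        exact_mod_cast this
      linarith
    · intro w hw
      rw [Finset.mem_Icc] at hw
      have h1 : (m:ℤ) ≤ w - x := by omega
      have h2 : ((m:ℝ)) ≤ (w:ℝ) - (x:ℝ)  := by exact_mod_cast h1
      rw [abs_sub_comm, abs_of_nonneg (by linarith)]
      linarith

/-- Counting step for the noisy ℓ_p Mastermind lower bound (integer `p ≥ 1`):
for any set `Q` of at most `(1/200)·exp(c_p·ε²·n)` queries from `{-k,…,k}^n`, at least
a `99/100` fraction of all `(2k+1)^n` hidden vectors `y` satisfy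
`|‖x−y‖_p^p − μ_x| ≤ ε·μ_x` simultaneously for every `x ∈ Q`, where `μ_x` is the
average of `‖x−z‖_p^p` over the box. -/
theorem mastermind_noisy_counting (p : ℕ) (hp : 1 ≤ p) :
    ∃ c : ℝ, 0 < c ∧
    ∀ (n k : ℕ), 1 ≤ n → 1 ≤ k →
    ∀ ε : ℝ, 0 < ε → ε < 1 →
    ∀ Q : Finset (Fin n → ℤ), (∀ x ∈ Q, ∀ i, |x i| ≤ (k : ℤ)) →
    (Q.card : ℝ) ≤ (1 / 200) * Real.exp (c * ε ^ 2 * (n : ℝ)) →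
    ∀ μ : (Fin n → ℤ) → ℝ,
      (∀ x : Fin n → ℤ,
        μ x = (∑ z ∈ Fintype.piFinset fun _ : Fin n => Finset.Icc (-(k : ℤ)) (k : ℤ),
            ∑ i, |(x i : ℝ) - (z i : ℝ)| ^ p) / (2 * (k : ℝ) + 1) ^ n) →
      (99 / 100 : ℝ) * (2 * (k : ℝ) + 1) ^ n ≤
        (Set.ncard {y : Fin n → ℤ | (∀ i, |y i| ≤ (k : ℤ)) ∧
          ∀ x ∈ Q, |(∑ i, |(x i : ℝ) - (y i : ℝ)| ^ p) - μ x| ≤ ε * μ x} : ℝ) := by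
  classical
  refine ⟨1 / (72 * (16:ℝ) ^ p), by positivity, ?_⟩
  set c : ℝ := 1 / (72 * (16:ℝ) ^ p) with hcdef
  intro n k hn hk ε hε hε1 Q hQ hQcard μ hμ
  set T : Finset ℤ := Finset.Icc (-(k:ℤ)) (k:ℤ) with hTdef
  have hk0 : (0:ℝ) < k := by exact_mod_cast hk
  have hn0 : (0:ℝ) < n := by exact_mod_cast hn
  have hTne : T.Nonempty := ⟨0, by rw [hTdef, Finset.mem_Icc]; omega⟩
  have hTcard : (T.card : ℝ) = 2 * (k:ℝ) + 1 := by
    rw [hTdef, Int.card_Icc]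
    have : ((k:ℤ) + 1 - (-(k:ℤ))).toNat = 2 * k + 1 := by omega
    rw [this]
    push_cast
    ring
  have hTcard0 : (T.card : ℝ) ≠ 0 := by rw [hTcard]; positivity
  set B : ℝ := (2 * (k:ℝ)) ^ p with hBdef
  have hB : 0 < B := by positivity
  set box := Fintype.piFinset (fun _ : Fin n => T) with hboxdef
  have hboxcard : (box.card : ℝ) = (T.card : ℝ) ^ n := by
    rw [hboxdef, Fintype.card_piFinset]
    push_cast
    rw [Finset.prod_const, Finset.card_univ, Fintype.card_fin]
  -- per-query analysis
  have perquery : ∀ x ∈ Q,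
      ((box.filter (fun y => ¬ |(∑ i, |(x i : ℝ) - (y i : ℝ)| ^ p) - μ x| ≤ ε * μ x)).card : ℝ)
        ≤ 2 * Real.exp (-(c * ε ^ 2 * n)) * (T.card : ℝ) ^ n := by
    intro x hxQ
    set f : Fin n → ℤ → ℝ := fun i w => |(x i : ℝ) - (w : ℝ)| ^ p with hfdef
    have hf : ∀ i, ∀ w ∈ T, 0 ≤ f i w ∧ f i w ≤ B := by
      intro i w hw
      refine ⟨by positivity, ?_⟩
      rw [hfdef, hBdef]
      apply pow_le_pow_left₀ (abs_nonneg _)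
      rw [hTdef, Finset.mem_Icc] at hw
      have h1 : |(x i : ℝ)| ≤ (k:ℝ) := by
        have := hQ x hxQ i
        rw [← Int.cast_abs]
        exact_mod_cast this
      have h2 : |(w : ℝ)| ≤ (k:ℝ) := by
        rw [← Int.cast_abs]
        have : |w| ≤ (k:ℤ) := abs_le.2 ⟨hw.1, hw.2⟩
        exact_mod_cast this
      calc |(x i : ℝ) - (w:ℝ)| ≤ |(x i : ℝ)| + |(w:ℝ)| := abs_sub _ _
      _ ≤ 2 * (k:ℝ) := by linarith
    -- μ x equals the sum of coordinate means
    have hμeq : μ x = ∑ i, (∑ w ∈ T, f i w) / T.card := by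
      rw [hμ x]
      have hswap : (∑ z ∈ box, ∑ i, f i (z i)) = ∑ i, ∑ z ∈ box, f i (z i) :=
        Finset.sum_comm
      have hcoord : ∀ i : Fin n, ∑ z ∈ box, f i (z i) =
          (T.card : ℝ) ^ (n - 1) * ∑ w ∈ T, f i w := fun i => sum_box_coord T (f i) i
      rw [show (∑ z ∈ Fintype.piFinset fun _ : Fin n => Finset.Icc (-(k : ℤ)) (k : ℤ),
            ∑ i, |(x i : ℝ) - (z i : ℝ)| ^ p) = ∑ z ∈ box, ∑ i, f i (z i) from rfl]
      rw [hswap, Finset.sum_congr rfl (fun i _ => hcoord i), ← hTcard,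
        Finset.sum_div]
      apply Finset.sum_congr rfl
      intro i _
      rw [show (T.card : ℝ) ^ n = (T.card : ℝ) ^ (n - 1) * T.card by
        rw [← pow_succ]; congr 1; omega]
      rw [mul_div_mul_left _ _ (by positivity : ((T.card:ℝ)^(n-1)) ≠ 0)]
    -- lower bound on μ x
    have hμlb : (n : ℝ) * ((k:ℝ) ^ p / (6 * 2 ^ p)) ≤ μ x := by
      rw [hμeq]
      have hone : ∀ i : Fin n, (k:ℝ) ^ p / (6 * 2 ^ p) ≤ (∑ w ∈ T, f i w) / T.card := by
        intro i
        have hS := sum_abs_pow_lb p k hk (x i) (hQ x hxQ i)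
        have step : (k:ℝ) ^ p / (6 * 2 ^ p) ≤ (((k:ℝ)/2) * ((k:ℝ)/2) ^ p) / (2 * (k:ℝ) + 1) := by
          rw [div_pow]
          have hkp : (0:ℝ) ≤ (k:ℝ) ^ p := by positivity
          have hk1 : (1:ℝ) ≤ (k:ℝ) := by exact_mod_cast hk
          have h2p : (0:ℝ) < (2:ℝ) ^ p := by positivity
          rw [div_le_div_iff₀ (by positivity) (by positivity)]
          have hexp1 : (k:ℝ)/2 * ((k:ℝ)^p / 2^p) * (6 * 2^p) = 3 * (k:ℝ) * (k:ℝ)^p := by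
            field_simp; ring
          rw [hexp1]
          try nlinarith [mul_nonneg hkp (sub_nonneg.2 hk1)]
        calc (k:ℝ) ^ p / (6 * 2 ^ p) ≤ (((k:ℝ)/2) * ((k:ℝ)/2) ^ p) / (2 * (k:ℝ) + 1) := step
        _ ≤ (∑ w ∈ T, f i w) / T.card := by
            rw [hTcard]
            gcongr
      calc (n:ℝ) * ((k:ℝ) ^ p / (6 * 2 ^ p)) = ∑ _i : Fin n, (k:ℝ) ^ p / (6 * 2 ^ p) := by
            rw [Finset.sum_const, Finset.card_univ, Fintype.card_fin, nsmul_eq_mul]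
      _ ≤ _ := Finset.sum_le_sum fun i _ => hone i
    have hμpos : 0 < μ x := lt_of_lt_of_le (by positivity) hμlb
    set s : ℝ := ε * μ x with hsdef
    have hs : 0 < s := by positivity
    -- exponent comparison
    have hexp : Real.exp (-(s ^ 2) / (2 * n * B ^ 2)) ≤ Real.exp (-(c * ε ^ 2 * n)) := by
      rw [Real.exp_le_exp, neg_div, neg_le_neg_iff]
      have hμ2 : (ε * ((n:ℝ) * ((k:ℝ) ^ p / (6 * 2 ^ p)))) ^ 2 ≤ s ^ 2 := by
        apply pow_le_pow_left₀ (by positivity)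
        rw [hsdef]
        exact mul_le_mul_of_nonneg_left hμlb hε.le
      have heq : c * ε ^ 2 * n = (ε * ((n:ℝ) * ((k:ℝ) ^ p / (6 * 2 ^ p)))) ^ 2 / (2 * n * B ^ 2) := by
        rw [hcdef, hBdef]
        have h16 : (16:ℝ) ^ p = ((2:ℝ) ^ p) ^ 4 := by
          rw [show (16:ℝ) = 2 ^ 4 by norm_num, ← pow_mul, ← pow_mul, mul_comm]
        have h2k : (2 * (k:ℝ)) ^ p = 2 ^ p * (k:ℝ) ^ p := mul_pow 2 _ p
        rw [h16, h2k]
        have hkp : ((k:ℝ) ^ p) ≠ 0 := by positivity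
        have h2p : ((2:ℝ) ^ p) ≠ 0 := by positivity
        field_simp
        ring
      rw [heq]
      gcongr
    -- upper tail
    have hupper := chernoff_box hn T hTne f B hB hf s hs
    rw [← hμeq] at hupper
    -- lower tail
    set g : Fin n → ℤ → ℝ := fun i w => B - f i w with hgdef
    have hg : ∀ i, ∀ w ∈ T, 0 ≤ g i w ∧ g i w ≤ B := by
      intro i w hw
      have := hf i w hw
      constructor
      · rw [hgdef]; simp only; linarith [this.2]
      · rw [hgdef]; simp only; linarith [this.1]
    have hlower0 := chernoff_box hn T hTne g B hB hg s hs
    have hgm : ∑ i, (∑ w ∈ T, g i w) / (T.card : ℝ) = n * B - μ x := by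
      rw [hμeq]
      have : ∀ i : Fin n, (∑ w ∈ T, g i w) / (T.card : ℝ) =
          B - (∑ w ∈ T, f i w) / T.card := by
        intro i
        rw [hgdef]
        simp only
        rw [Finset.sum_sub_distrib, Finset.sum_const, nsmul_eq_mul, sub_div,
          mul_div_cancel_left₀ _ hTcard0]
      rw [Finset.sum_congr rfl (fun i _ => this i), Finset.sum_sub_distrib,
        Finset.sum_const, Finset.card_univ, Fintype.card_fin, nsmul_eq_mul]
    have hfiltereq : box.filter
        (fun z => s ≤ (∑ i, g i (z i)) - ∑ i, (∑ w ∈ T, g i w) / (T.card:ℝ)) =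
        box.filter (fun z => s ≤ μ x - ∑ i, f i (z i)) := by
      apply Finset.filter_congr
      intro z _
      rw [hgm]
      have hz : ∑ i, g i (z i) = n * B - ∑ i, f i (z i) := by
        rw [hgdef]
        simp only
        rw [Finset.sum_sub_distrib, Finset.sum_const, Finset.card_univ,
          Fintype.card_fin, nsmul_eq_mul]
      rw [hz]
      constructor <;> intro h <;> simp at h ⊢ <;> linarith
    rw [hfiltereq] at hlower0
    -- combine
    have hsubset : box.filter (fun y => ¬ |(∑ i, |(x i : ℝ) - (y i : ℝ)| ^ p) - μ x| ≤ ε * μ x) ⊆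
        (box.filter (fun z => s ≤ (∑ i, f i (z i)) - μ x)) ∪
        (box.filter (fun z => s ≤ μ x - ∑ i, f i (z i))) := by
      intro y hy
      rw [Finset.mem_filter] at hy
      rw [Finset.mem_union, Finset.mem_filter, Finset.mem_filter]
      have habs : s < |(∑ i, f i (y i)) - μ x| := by
        have := hy.2
        rw [not_le] at this
        exact this
      rcases abs_cases ((∑ i, f i (y i)) - μ x) with ⟨he, _⟩ | ⟨he, _⟩
      · left; exact ⟨hy.1, by rw [he] at habs; linarith⟩
      · right; exact ⟨hy.1, by rw [he] at habs; linarith⟩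
    calc ((box.filter (fun y => ¬ |(∑ i, |(x i : ℝ) - (y i : ℝ)| ^ p) - μ x| ≤ ε * μ x)).card : ℝ)
        ≤ ((box.filter (fun z => s ≤ (∑ i, f i (z i)) - μ x)).card : ℝ) +
          ((box.filter (fun z => s ≤ μ x - ∑ i, f i (z i))).card : ℝ) := by
          have := Finset.card_le_card hsubset
          have h2 := Finset.card_union_le
            (box.filter (fun z => s ≤ (∑ i, f i (z i)) - μ x))
            (box.filter (fun z => s ≤ μ x - ∑ i, f i (z i)))
          push_cast
          exact_mod_cast le_trans this h2
    _ ≤ Real.exp (-(s^2)/(2*n*B^2)) * (T.card:ℝ)^n + Real.exp (-(s^2)/(2*n*B^2)) * (T.card:ℝ)^n :=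
          add_le_add hupper hlower0
    _ ≤ 2 * Real.exp (-(c * ε ^ 2 * n)) * (T.card : ℝ) ^ n := by
          have hTn : (0:ℝ) ≤ (T.card:ℝ)^n := by positivity
          nlinarith [mul_le_mul_of_nonneg_right hexp hTn]
  -- global union bound
  set P : (Fin n → ℤ) → Prop :=
    fun y => ∀ x ∈ Q, |(∑ i, |(x i : ℝ) - (y i : ℝ)| ^ p) - μ x| ≤ ε * μ x with hPdef
  set BadAll := box.filter (fun y => ¬ P y) with hBadAll
  have hBadsub : BadAll ⊆ Q.biUnion (fun x =>
      box.filter (fun y => ¬ |(∑ i, |(x i : ℝ) - (y i : ℝ)| ^ p) - μ x| ≤ ε * μ x)) := by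
    intro y hy
    rw [hBadAll, Finset.mem_filter] at hy
    obtain ⟨hybox, hny⟩ := hy
    simp only [hPdef] at hny
    push_neg at hny
    obtain ⟨x, hxQ, hxbad⟩ := hny
    rw [Finset.mem_biUnion]
    exact ⟨x, hxQ, Finset.mem_filter.2 ⟨hybox, not_le.2 hxbad⟩⟩
  have hBadcard : (BadAll.card : ℝ) ≤ (1/100) * (T.card : ℝ) ^ n := by
    calc (BadAll.card : ℝ) ≤ ((Q.biUnion (fun x =>
        box.filter (fun y => ¬ |(∑ i, |(x i : ℝ) - (y i : ℝ)| ^ p) - μ x| ≤ ε * μ x))).card : ℝ) := by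
          exact_mod_cast Finset.card_le_card hBadsub
    _ ≤ ∑ x ∈ Q, ((box.filter
          (fun y => ¬ |(∑ i, |(x i : ℝ) - (y i : ℝ)| ^ p) - μ x| ≤ ε * μ x)).card : ℝ) := by
          exact_mod_cast Finset.card_biUnion_le
    _ ≤ ∑ _x ∈ Q, 2 * Real.exp (-(c * ε ^ 2 * n)) * (T.card : ℝ) ^ n :=
          Finset.sum_le_sum perquery
    _ = (Q.card : ℝ) * (2 * Real.exp (-(c * ε ^ 2 * n)) * (T.card : ℝ) ^ n) := by
          rw [Finset.sum_const, nsmul_eq_mul]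
    _ ≤ ((1/200) * Real.exp (c * ε ^ 2 * n)) * (2 * Real.exp (-(c * ε ^ 2 * n)) * (T.card : ℝ) ^ n) := by
          apply mul_le_mul_of_nonneg_right hQcard
          positivity
    _ = (1/100) * (T.card : ℝ) ^ n := by
          rw [show (1/200 : ℝ) * Real.exp (c * ε ^ 2 * n) *
              (2 * Real.exp (-(c * ε ^ 2 * n)) * (T.card : ℝ) ^ n) =
            (1/100) * (Real.exp (c * ε ^ 2 * n) * Real.exp (-(c * ε ^ 2 * n))) * (T.card : ℝ) ^ n by ring]
          rw [← Real.exp_add]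
          simp
  -- the good set
  have hkey : (99 / 100 : ℝ) * (T.card : ℝ) ^ n ≤ ((box.filter P).card : ℝ) := by
    have hsplit : (box.filter P).card + BadAll.card = box.card :=
      Finset.card_filter_add_card_filter_not _
    have : ((box.filter P).card : ℝ) = (T.card : ℝ) ^ n - (BadAll.card : ℝ) := by
      rw [← hboxcard]
      have := congrArg (fun m : ℕ => (m : ℝ)) hsplit
      push_cast at this
      linarith
    rw [this]
    linarith
  -- identify the set with the filter
  have hseteq : {y : Fin n → ℤ | (∀ i, |y i| ≤ (k : ℤ)) ∧
      ∀ x ∈ Q, |(∑ i, |(x i : ℝ) - (y i : ℝ)| ^ p) - μ x| ≤ ε * μ x} = ↑(box.filter P) := by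
    ext y
    simp only [Set.mem_setOf_eq, Finset.coe_filter, Set.mem_setOf_eq, hPdef]
    constructor
    · rintro ⟨h1, h2⟩
      refine ⟨?_, h2⟩
      rw [hboxdef, Fintype.mem_piFinset]
      intro i
      rw [hTdef, Finset.mem_Icc]
      exact abs_le.1 (h1 i)
    · rintro ⟨h1, h2⟩
      refine ⟨?_, h2⟩
      intro i
      rw [hboxdef, Fintype.mem_piFinset] at h1
      have := h1 i
      rw [hTdef, Finset.mem_Icc] at this
      exact abs_le.2 this
  rw [hseteq, Set.ncard_coe_finset, ← hTcard]
  exact hkey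
end

section
/- Let p ≥ 1 be a real number, n ≥ 1 an integer, z ∈ ℝ^n, and R ≥ 0 a real number. Then the number of lattice points y ∈ ℤ^n with ‖y − z‖_p ≤ R satisfies #{y ∈ ℤ^n : ‖y − z‖_p ≤ R} ≤ (R + n^{1/p})^n · 2^n · Γ(1 + 1/p)^n / Γ(1 + n/p), where Γ is the Gamma function. -/
/-- Lattice point count in an ℓ_p ball: for real `p ≥ 1`, `z ∈ ℝ^n` and `R ≥ 0`,
the number of `y ∈ ℤ^n` with `‖y − z‖_p ≤ R` is at most
`(R + n^{1/p})^n · 2^n · Γ(1 + 1/p)^n / Γ(1 + n/p)`. -/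
theorem lattice_points_in_lp_ball (p : ℝ) (hp : 1 ≤ p) (n : ℕ) (hn : 1 ≤ n)
    (z : Fin n → ℝ) (R : ℝ) (hR : 0 ≤ R) :
    (Set.ncard {y : Fin n → ℤ |
        (∑ i, |(y i : ℝ) - z i| ^ p) ^ (1 / p) ≤ R} : ℝ) ≤
      (R + (n : ℝ) ^ (1 / p)) ^ n * 2 ^ n * Real.Gamma (1 + 1 / p) ^ n /
        Real.Gamma (1 + (n : ℝ) / p) := by
  have hp0 : 0 < p := lt_of_lt_of_le one_pos hp
  set S : Set (Fin n → ℤ) :=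
    {y : Fin n → ℤ | (∑ i, |(y i : ℝ) - z i| ^ p) ^ (1 / p) ≤ R} with hS
  have hΓ1 : 0 < Real.Gamma (1 + 1 / p) :=
    Real.Gamma_pos_of_pos (by positivity)
  have hΓ2 : 0 < Real.Gamma (1 + (n : ℝ) / p) :=
    Real.Gamma_pos_of_pos (by positivity)
  have hRHS : 0 ≤ (R + (n : ℝ) ^ (1 / p)) ^ n * 2 ^ n * Real.Gamma (1 + 1 / p) ^ n /
      Real.Gamma (1 + (n : ℝ) / p) := by positivity
  by_cases hfin : S.Finite
  · -- radius of the enlarged ball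
    set r : ℝ := R + (n : ℝ) ^ (1 / p) with hr
    have hr0 : 0 ≤ r := by positivity
    -- the cubes
    set C : (Fin n → ℤ) → Set (Fin n → ℝ) :=
      fun y => Set.univ.pi fun i => Set.Ico (y i : ℝ) ((y i : ℝ) + 1) with hC
    have hmeas : ∀ y, MeasurableSet (C y) := fun y =>
      MeasurableSet.univ_pi fun i => measurableSet_Ico
    have hvol : ∀ y, MeasureTheory.volume (C y) = 1 := by
      intro y
      rw [hC, MeasureTheory.volume_pi_pi]
      simp [Real.volume_Ico]
    -- disjointness of cubes
    have hdisj : Set.PairwiseDisjoint ↑hfin.toFinset C := by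
      intro a _ b _ hab
      refine Set.disjoint_left.mpr fun x hxa hxb => hab ?_
      funext i
      have ha := hxa i (Set.mem_univ i)
      have hb := hxb i (Set.mem_univ i)
      simp only [Set.mem_Ico] at ha hb
      have h1 : ⌊x i⌋ = a i := Int.floor_eq_iff.mpr ha
      have h2 : ⌊x i⌋ = b i := Int.floor_eq_iff.mpr hb
      rw [← h1, h2]
    -- cubes sit inside the enlarged ball
    set B : Set (Fin n → ℝ) :=
      {x : Fin n → ℝ | (∑ i, |x i - z i| ^ p) ^ (1 / p) ≤ r} with hB
    have hsub : ∀ y ∈ hfin.toFinset, C y ⊆ B := by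
      intro y hy x hx
      have hyS : (∑ i, |(y i : ℝ) - z i| ^ p) ^ (1 / p) ≤ R := by
        have := (Set.Finite.mem_toFinset hfin).mp hy
        exact this
      have key := Real.Lp_add_le Finset.univ (fun i => (y i : ℝ) - z i)
        (fun i => x i - y i) hp
      simp only [show ∀ i, ((y i : ℝ) - z i) + (x i - (y i : ℝ)) = x i - z i from
        fun i => by ring] at key
      have hsecond : (∑ i, |x i - (y i : ℝ)| ^ p) ^ (1 / p) ≤ (n : ℝ) ^ (1 / p) := by
        have hterm : ∀ i, |x i - (y i : ℝ)| ^ p ≤ 1 := by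
          intro i
          have hi := hx i (Set.mem_univ i)
          simp only [Set.mem_Ico] at hi
          have habs : |x i - (y i : ℝ)| ≤ 1 := by
            rw [abs_le]; constructor <;> [linarith [hi.1]; linarith [hi.2]]
          calc |x i - (y i : ℝ)| ^ p ≤ 1 ^ p :=
                Real.rpow_le_rpow (abs_nonneg _) habs hp0.le
            _ = 1 := Real.one_rpow p
        have hsum : (∑ i, |x i - (y i : ℝ)| ^ p) ≤ (n : ℝ) := by
          calc (∑ i, |x i - (y i : ℝ)| ^ p) ≤ ∑ _i : Fin n, (1 : ℝ) :=
                Finset.sum_le_sum fun i _ => hterm i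
            _ = (n : ℝ) := by simp
        exact Real.rpow_le_rpow (Finset.sum_nonneg fun i _ => by positivity) hsum
          (by positivity)
      have : (∑ i, |x i - z i| ^ p) ^ (1 / p) ≤ R + (n : ℝ) ^ (1 / p) :=
        le_trans key (add_le_add hyS hsecond)
      exact this
    -- volume of the enlarged ball
    have hvolB : MeasureTheory.volume B =
        ENNReal.ofReal r ^ n *
          ENNReal.ofReal ((2 * Real.Gamma (1 / p + 1)) ^ n /
            Real.Gamma ((n : ℝ) / p + 1)) := by
      have hBeq : B = (fun x : Fin n → ℝ => -z + x) ⁻¹'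
          {x : Fin n → ℝ | (∑ i, |x i| ^ p) ^ (1 / p) ≤ r} := by
        ext x
        simp only [hB, Set.mem_setOf_eq, Set.mem_preimage, Pi.add_apply, Pi.neg_apply]
        constructor <;> intro h <;> convert h using 3 <;> ring
      have : Nonempty (Fin n) := ⟨⟨0, hn⟩⟩
      rw [hBeq, MeasureTheory.measure_preimage_add,
        MeasureTheory.volume_sum_rpow_le (Fin n) hp r]
      simp [Fintype.card_fin]
    -- count ≤ volume
    have hle : (hfin.toFinset.card : ENNReal) ≤ MeasureTheory.volume B := by
      calc (hfin.toFinset.card : ENNReal)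
          = ∑ y ∈ hfin.toFinset, MeasureTheory.volume (C y) := by
            simp [hvol]
        _ = MeasureTheory.volume (⋃ y ∈ hfin.toFinset, C y) :=
            (MeasureTheory.measure_biUnion_finset hdisj fun y _ => hmeas y).symm
        _ ≤ MeasureTheory.volume B := MeasureTheory.measure_mono
            (Set.iUnion₂_subset hsub)
    -- convert to reals
    have hprod : MeasureTheory.volume B = ENNReal.ofReal
        (r ^ n * ((2 * Real.Gamma (1 / p + 1)) ^ n / Real.Gamma ((n : ℝ) / p + 1))) := by
      rw [hvolB, ENNReal.ofReal_mul (by positivity), ENNReal.ofReal_pow hr0]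
    rw [hprod] at hle
    have hcard : (hfin.toFinset.card : ℝ) ≤
        r ^ n * ((2 * Real.Gamma (1 / p + 1)) ^ n / Real.Gamma ((n : ℝ) / p + 1)) := by
      rw [← ENNReal.ofReal_natCast] at hle
      exact (ENNReal.ofReal_le_ofReal_iff (by positivity)).mp hle
    have hncard : S.ncard = hfin.toFinset.card := Set.ncard_eq_toFinset_card S hfin
    rw [hncard]
    refine le_trans hcard (le_of_eq ?_)
    rw [add_comm (1 : ℝ) (1 / p), add_comm (1 : ℝ) ((n : ℝ) / p)]
    ring
  · rw [Set.Infinite.ncard hfin]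
    simpa using hRHS
end

section
/- Let k be a real number, let g₁,…,g_n : ℝ → ℝ be arbitrary functions, and for each i define hᵢ(t) = gᵢ(k − t), (hᵢ)_even(t) = (hᵢ(t) + hᵢ(−t))/2 and (hᵢ)_odd(t) = (hᵢ(t) − hᵢ(−t))/2. Then for every sign vector σ ∈ {−1, +1}^n and every y ∈ ℝ^n with |y_i| ≤ k for all i, one has Σᵢ gᵢ(|k·σᵢ − yᵢ|) = Σᵢ (hᵢ)_even(yᵢ) + Σᵢ σᵢ·(hᵢ)_odd(yᵢ). -/
/-- The key even/odd-part identity: for `hᵢ(t) = gᵢ(k − t)` with even part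
`(hᵢ)_even(t) = (gᵢ(k−t) + gᵢ(k+t))/2` and odd part `(hᵢ)_odd(t) = (gᵢ(k−t) − gᵢ(k+t))/2`,
any sign vector `σ ∈ {±1}^n` and any `y` with `|yᵢ| ≤ k` satisfy
`Σᵢ gᵢ(|k·σᵢ − yᵢ|) = Σᵢ (hᵢ)_even(yᵢ) + Σᵢ σᵢ·(hᵢ)_odd(yᵢ)`. -/
theorem separable_sign_query_identity (n : ℕ) (k : ℝ) (g : Fin n → ℝ → ℝ)
    (σ : Fin n → ℝ) (hσ : ∀ i, σ i = 1 ∨ σ i = -1)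
    (y : Fin n → ℝ) (hy : ∀ i, |y i| ≤ k) :
    ∑ i, g i |k * σ i - y i| =
      (∑ i, (g i (k - y i) + g i (k + y i)) / 2) +
        ∑ i, σ i * ((g i (k - y i) - g i (k + y i)) / 2) := by
  rw [← Finset.sum_add_distrib]
  apply Finset.sum_congr rfl
  intro i _
  have h := abs_le.mp (hy i)
  rcases hσ i with h1 | h1 <;> rw [h1]
  · rw [show |k * 1 - y i| = k - y i by rw [abs_of_nonneg]; ring_nf; linarith]
    ring
  · rw [show |k * -1 - y i| = k + y i by
      rw [show k * -1 - y i = -(k + y i) by ring, abs_neg, abs_of_nonneg]; linarith]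
    ring
end

section
/- Let k > 0 be a real number and define h(x) = √(1 + (k−x)²/2) − √(1 + (k+x)²/2) for x ∈ [−k, k]. Then h is strictly decreasing on [−k, k], and for all real x₂ < x₁ in [−k, k] one has h(x₂) − h(x₁) ≥ (x₁ − x₂)·k/√(1 + 2k²). In particular, for distinct integers x₁ ≠ x₂ in [−k,k], |h(x₁) − h(x₂)| ≥ k/√(1 + 2k²), and |h(x)| ≤ √(1 + 2k²) for all x ∈ [−k,k]. -/
set_option maxHeartbeats 800000

private lemma l1l2_key (k : ℝ) (hk : 0 < k) {x₁ x₂ : ℝ} (h1 : x₁ ∈ Set.Icc (-k) k)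
    (h2 : x₂ ∈ Set.Icc (-k) k) (hlt : x₂ < x₁) :
    (x₁ - x₂) * k / Real.sqrt (1 + 2 * k ^ 2) ≤
      ((Real.sqrt (1 + (k - x₂) ^ 2 / 2) - Real.sqrt (1 + (k + x₂) ^ 2 / 2)) -
        (Real.sqrt (1 + (k - x₁) ^ 2 / 2) - Real.sqrt (1 + (k + x₁) ^ 2 / 2))) := by
  obtain ⟨l1, u1⟩ := h1
  obtain ⟨l2, u2⟩ := h2
  set S := Real.sqrt (1 + 2 * k ^ 2) with hS
  have hSpos : 0 < S := Real.sqrt_pos.mpr (by nlinarith)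
  have hSsq : S ^ 2 = 1 + 2 * k ^ 2 := Real.sq_sqrt (by nlinarith)
  set a₁ := Real.sqrt (1 + (k - x₁) ^ 2 / 2) with ha₁
  set a₂ := Real.sqrt (1 + (k - x₂) ^ 2 / 2) with ha₂
  set b₁ := Real.sqrt (1 + (k + x₁) ^ 2 / 2) with hb₁
  set b₂ := Real.sqrt (1 + (k + x₂) ^ 2 / 2) with hb₂
  have ha₁sq : a₁ ^ 2 = 1 + (k - x₁) ^ 2 / 2 := Real.sq_sqrt (by positivity)
  have ha₂sq : a₂ ^ 2 = 1 + (k - x₂) ^ 2 / 2 := Real.sq_sqrt (by positivity)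
  have hb₁sq : b₁ ^ 2 = 1 + (k + x₁) ^ 2 / 2 := Real.sq_sqrt (by positivity)
  have hb₂sq : b₂ ^ 2 = 1 + (k + x₂) ^ 2 / 2 := Real.sq_sqrt (by positivity)
  have ha₁pos : (0:ℝ) < a₁ := Real.sqrt_pos.mpr (by positivity)
  have ha₂pos : (0:ℝ) < a₂ := Real.sqrt_pos.mpr (by positivity)
  have hb₁pos : (0:ℝ) < b₁ := Real.sqrt_pos.mpr (by positivity)
  have hb₂pos : (0:ℝ) < b₂ := Real.sqrt_pos.mpr (by positivity)
  have ha₁S : a₁ ≤ S := Real.sqrt_le_sqrt (by nlinarith)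
  have ha₂S : a₂ ≤ S := Real.sqrt_le_sqrt (by nlinarith)
  have hb₁S : b₁ ≤ S := Real.sqrt_le_sqrt (by nlinarith)
  have hb₂S : b₂ ≤ S := Real.sqrt_le_sqrt (by nlinarith)
  have hDa : (a₂ - a₁) * (a₂ + a₁) = (x₁ - x₂) * (2 * k - x₁ - x₂) / 2 := by
    have : (a₂ - a₁) * (a₂ + a₁) = a₂ ^ 2 - a₁ ^ 2 := by ring
    rw [this, ha₂sq, ha₁sq]; ring
  have hDb : (b₁ - b₂) * (b₁ + b₂) = (x₁ - x₂) * (2 * k + x₁ + x₂) / 2 := by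
    have : (b₁ - b₂) * (b₁ + b₂) = b₁ ^ 2 - b₂ ^ 2 := by ring
    rw [this, hb₁sq, hb₂sq]; ring
  have hA : 0 ≤ a₂ - a₁ := by nlinarith
  have hB : 0 ≤ b₁ - b₂ := by nlinarith
  rw [div_le_iff₀ hSpos]
  have e1 : (x₁ - x₂) * (2 * k - x₁ - x₂) / 2 ≤ (a₂ - a₁) * (2 * S) := by
    rw [← hDa]
    have := mul_le_mul_of_nonneg_left (add_le_add ha₂S ha₁S) hA
    linarith
  have e2 : (x₁ - x₂) * (2 * k + x₁ + x₂) / 2 ≤ (b₁ - b₂) * (2 * S) := by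
    rw [← hDb]
    have := mul_le_mul_of_nonneg_left (add_le_add hb₁S hb₂S) hB
    linarith
  nlinarith [e1, e2]


/-- Separation bounds for the odd part `h(x) = √(1+(k−x)²/2) − √(1+(k+x)²/2)` arising in
the ℓ₁-ℓ₂ loss Mastermind algorithm: `h` is strictly decreasing on `[−k,k]`, decreases
at rate at least `k/√(1+2k²)`, is separated by at least `k/√(1+2k²)` on distinct
integers of `[−k,k]`, and satisfies `|h| ≤ √(1+2k²)` on `[−k,k]`. -/
theorem l1l2_odd_part_separation (k : ℝ) (hk : 0 < k) :
    StrictAntiOn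
      (fun x : ℝ => Real.sqrt (1 + (k - x) ^ 2 / 2) - Real.sqrt (1 + (k + x) ^ 2 / 2))
      (Set.Icc (-k) k) ∧
    (∀ x₁ x₂ : ℝ, x₁ ∈ Set.Icc (-k) k → x₂ ∈ Set.Icc (-k) k → x₂ < x₁ →
      (x₁ - x₂) * k / Real.sqrt (1 + 2 * k ^ 2) ≤
        ((Real.sqrt (1 + (k - x₂) ^ 2 / 2) - Real.sqrt (1 + (k + x₂) ^ 2 / 2)) -
          (Real.sqrt (1 + (k - x₁) ^ 2 / 2) - Real.sqrt (1 + (k + x₁) ^ 2 / 2)))) ∧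
    (∀ x₁ x₂ : ℤ, (x₁ : ℝ) ∈ Set.Icc (-k) k → (x₂ : ℝ) ∈ Set.Icc (-k) k → x₁ ≠ x₂ →
      k / Real.sqrt (1 + 2 * k ^ 2) ≤
        |(Real.sqrt (1 + (k - (x₁ : ℝ)) ^ 2 / 2) - Real.sqrt (1 + (k + (x₁ : ℝ)) ^ 2 / 2)) -
          (Real.sqrt (1 + (k - (x₂ : ℝ)) ^ 2 / 2) -
            Real.sqrt (1 + (k + (x₂ : ℝ)) ^ 2 / 2))|) ∧
    (∀ x : ℝ, x ∈ Set.Icc (-k) k →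
      |Real.sqrt (1 + (k - x) ^ 2 / 2) - Real.sqrt (1 + (k + x) ^ 2 / 2)| ≤
        Real.sqrt (1 + 2 * k ^ 2)) := by
  have key : ∀ {x₁ x₂ : ℝ}, x₁ ∈ Set.Icc (-k) k → x₂ ∈ Set.Icc (-k) k → x₂ < x₁ →
      (x₁ - x₂) * k / Real.sqrt (1 + 2 * k ^ 2) ≤
        ((Real.sqrt (1 + (k - x₂) ^ 2 / 2) - Real.sqrt (1 + (k + x₂) ^ 2 / 2)) -
          (Real.sqrt (1 + (k - x₁) ^ 2 / 2) - Real.sqrt (1 + (k + x₁) ^ 2 / 2))) :=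
    fun h1 h2 h => l1l2_key k hk h1 h2 h
  have hSpos : 0 < Real.sqrt (1 + 2 * k ^ 2) := Real.sqrt_pos.mpr (by nlinarith)
  refine ⟨?_, fun x₁ x₂ h1 h2 h => key h1 h2 h, ?_, ?_⟩
  · intro a ha b hb hab
    have := key hb ha hab
    have hpos : 0 < (b - a) * k / Real.sqrt (1 + 2 * k ^ 2) :=
      div_pos (mul_pos (by linarith) hk) hSpos
    simp only []
    linarith
  · intro x₁ x₂ h1 h2 hne
    rcases hne.lt_or_gt with h | h
    · have hx : (x₁ : ℝ) < x₂ := by exact_mod_cast h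
      have h1' : ((x₂ : ℝ) - x₁) ≥ 1 := by
        have : (x₁ : ℤ) + 1 ≤ x₂ := h
        have : ((x₁:ℝ) + 1 ≤ x₂) := by exact_mod_cast this
        linarith
      have := key h2 h1 hx
      have hb : k / Real.sqrt (1 + 2 * k ^ 2) ≤ ((x₂:ℝ) - x₁) * k / Real.sqrt (1 + 2 * k ^ 2) := by
        apply div_le_div_of_nonneg_right _ hSpos.le
        nlinarith
      refine le_trans (le_trans hb this) (le_abs_self _)
    · have hx : (x₂ : ℝ) < x₁ := by exact_mod_cast h
      have h1' : ((x₁ : ℝ) - x₂) ≥ 1 := by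
        have : (x₂ : ℤ) + 1 ≤ x₁ := h
        have : ((x₂:ℝ) + 1 ≤ x₁) := by exact_mod_cast this
        linarith
      have := key h1 h2 hx
      have hb : k / Real.sqrt (1 + 2 * k ^ 2) ≤ ((x₁:ℝ) - x₂) * k / Real.sqrt (1 + 2 * k ^ 2) := by
        apply div_le_div_of_nonneg_right _ hSpos.le
        nlinarith
      refine le_trans (le_trans hb this) (neg_le_abs _ |>.trans' (by linarith))
  · intro x hx
    obtain ⟨l, u⟩ := hx
    have hS1 : (1:ℝ) ≤ Real.sqrt (1 + 2 * k ^ 2) := by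
      nlinarith [Real.sq_sqrt (show (0:ℝ) ≤ 1 + 2 * k ^ 2 by nlinarith),
        Real.sqrt_nonneg (1 + 2 * k ^ 2)]
    have h1 : Real.sqrt (1 + (k - x) ^ 2 / 2) ≤ Real.sqrt (1 + 2 * k ^ 2) :=
      Real.sqrt_le_sqrt (by nlinarith)
    have h2 : Real.sqrt (1 + (k + x) ^ 2 / 2) ≤ Real.sqrt (1 + 2 * k ^ 2) :=
      Real.sqrt_le_sqrt (by nlinarith)
    have h1' : (0:ℝ) ≤ Real.sqrt (1 + (k - x) ^ 2 / 2) := Real.sqrt_nonneg _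
    have h2' : (0:ℝ) ≤ Real.sqrt (1 + (k + x) ^ 2 / 2) := Real.sqrt_nonneg _
    rw [abs_sub_le_iff]
    constructor <;> linarith
end

section
/- Let c > 0 and k > 0 be real numbers and define h(x) = −c·x + (c²/2)·log((c + k + x)/(c + k − x)) for x ∈ [−k, k]. Then h is strictly decreasing on [−k, k], and for all real x₂ < x₁ in [−k, k] one has h(x₂) − h(x₁) ≥ (x₁ − x₂)·c·k/(c + 2k). In particular, for distinct integers x₁ ≠ x₂ in [−k, k], |h(x₁) − h(x₂)| ≥ c·k/(c + 2k). -/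
private lemma fair_key (c k : ℝ) (hc : 0 < c) (hk : 0 < k) :
    ∀ x₁ x₂ : ℝ, x₁ ∈ Set.Icc (-k) k → x₂ ∈ Set.Icc (-k) k → x₂ < x₁ →
      (x₁ - x₂) * c * k / (c + 2 * k) ≤
        ((-c * x₂ + c ^ 2 / 2 * Real.log ((c + k + x₂) / (c + k - x₂))) -
          (-c * x₁ + c ^ 2 / 2 * Real.log ((c + k + x₁) / (c + k - x₁)))) := by
  set r : ℝ := c * k / (c + 2 * k) with hr
  set f : ℝ → ℝ := fun x => -c * x + c ^ 2 / 2 * Real.log ((c + k + x) / (c + k - x))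
    with hf
  set g : ℝ → ℝ := fun x => f x + r * x with hg
  have hck : 0 < c + 2 * k := by linarith
  -- continuity of g on Icc
  have hcont : ContinuousOn g (Set.Icc (-k) k) := by
    apply ContinuousOn.add _ (continuousOn_const.mul continuousOn_id)
    apply ContinuousOn.add ((continuousOn_const.mul continuousOn_id))
    apply ContinuousOn.mul continuousOn_const
    apply ContinuousOn.log
    · exact ContinuousOn.div (by fun_prop) (by fun_prop)
        (fun x hx => by have := hx.2; intro h; linarith)
    · intro x hx
      have h1 : 0 < c + k + x := by have := hx.1; linarith
      have h2 : 0 < c + k - x := by have := hx.2; linarith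
      positivity
  -- antitone via derivative
  have hder : ∀ x ∈ Set.Ioo (-k) k, HasDerivAt g
      (-c * 1 + c ^ 2 / 2 * (1 / (c + k + x) - -1 / (c + k - x)) + r * 1) x := by
    intro x hx
    obtain ⟨hx1, hx2⟩ := hx
    have ha : 0 < c + k + x := by linarith
    have hb : 0 < c + k - x := by linarith
    -- derivative of the log-difference form
    have d1 : HasDerivAt (fun y : ℝ => Real.log (c + k + y)) (1 / (c + k + x)) x := by
      have : HasDerivAt (fun y : ℝ => c + k + y) 1 x := (hasDerivAt_id x).const_add (c + k)
      simpa using this.log (ne_of_gt ha)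
    have d2 : HasDerivAt (fun y : ℝ => Real.log (c + k - y)) (-1 / (c + k - x)) x := by
      have : HasDerivAt (fun y : ℝ => c + k - y) (-1) x := (hasDerivAt_id x).const_sub (c + k)
      simpa using this.log (ne_of_gt hb)
    have d3 : HasDerivAt
        (fun y : ℝ => -c * y + c ^ 2 / 2 * (Real.log (c + k + y) - Real.log (c + k - y))
          + r * y)
        (-c * 1 + c ^ 2 / 2 * (1 / (c + k + x) - -1 / (c + k - x)) + r * 1) x := by
      exact (((hasDerivAt_id x).const_mul (-c)).add
        ((d1.sub d2).const_mul (c ^ 2 / 2))).add ((hasDerivAt_id x).const_mul r)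
    have heq : g =ᶠ[nhds x]
        (fun y : ℝ => -c * y + c ^ 2 / 2 * (Real.log (c + k + y) - Real.log (c + k - y))
          + r * y) := by
      filter_upwards [isOpen_Ioo.mem_nhds (show x ∈ Set.Ioo (-k) k from ⟨hx1, hx2⟩)] with y hy
      have hya : (0:ℝ) < c + k + y := by have := hy.1; linarith
      have hyb : (0:ℝ) < c + k - y := by have := hy.2; linarith
      simp only [hg, hf, Real.log_div (ne_of_gt hya) (ne_of_gt hyb)]
    exact HasDerivAt.congr_of_eventuallyEq d3 heq
  have hant : AntitoneOn g (Set.Icc (-k) k) := by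
    apply antitoneOn_of_deriv_nonpos (convex_Icc _ _) hcont
    · intro x hx
      rw [interior_Icc] at hx
      exact (hder x hx).differentiableAt.differentiableWithinAt
    intro x hx
    rw [interior_Icc] at hx
    obtain ⟨hx1, hx2⟩ := hx
    have ha : 0 < c + k + x := by linarith
    have hb : 0 < c + k - x := by linarith
    rw [(hder x ⟨hx1, hx2⟩).deriv]
    -- show the derivative is ≤ 0
    have hab : c * (c + 2 * k) ≤ (c + k + x) * (c + k - x) := by nlinarith
    have hsum : 1 / (c + k + x) - -1 / (c + k - x)
        = 2 * (c + k) / ((c + k + x) * (c + k - x)) := by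
      field_simp; ring
    rw [hsum]
    have hpos : 0 < c * (c + 2 * k) := by positivity
    have hdiv : 2 * (c + k) / ((c + k + x) * (c + k - x))
        ≤ 2 * (c + k) / (c * (c + 2 * k)) :=
      div_le_div_of_nonneg_left (by positivity) hpos hab
    have hzero : -c * 1 + c ^ 2 / 2 * (2 * (c + k) / (c * (c + 2 * k))) + r * 1 = 0 := by
      rw [hr]; field_simp; ring
    nlinarith [sq_nonneg c]
  -- conclude
  intro x₁ x₂ h₁ h₂ hlt
  have := hant h₂ h₁ (le_of_lt hlt)
  have hfle : r * (x₁ - x₂) ≤ f x₂ - f x₁ := by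
    simp only [hg] at this; linarith
  have : (x₁ - x₂) * c * k / (c + 2 * k) = r * (x₁ - x₂) := by rw [hr]; ring
  rw [this]
  exact hfle

/-- Separation bounds for the odd part `h(x) = −c·x + (c²/2)·log((c+k+x)/(c+k−x))`
arising in the Fair estimator loss Mastermind algorithm: `h` is strictly decreasing
on `[−k,k]`, decreases at rate at least `c·k/(c+2k)`, and is separated by at least
`c·k/(c+2k)` on distinct integers of `[−k,k]`. -/
theorem fair_odd_part_separation (c k : ℝ) (hc : 0 < c) (hk : 0 < k) :
    StrictAntiOn
      (fun x : ℝ => -c * x + c ^ 2 / 2 * Real.log ((c + k + x) / (c + k - x)))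
      (Set.Icc (-k) k) ∧
    (∀ x₁ x₂ : ℝ, x₁ ∈ Set.Icc (-k) k → x₂ ∈ Set.Icc (-k) k → x₂ < x₁ →
      (x₁ - x₂) * c * k / (c + 2 * k) ≤
        ((-c * x₂ + c ^ 2 / 2 * Real.log ((c + k + x₂) / (c + k - x₂))) -
          (-c * x₁ + c ^ 2 / 2 * Real.log ((c + k + x₁) / (c + k - x₁))))) ∧
    (∀ x₁ x₂ : ℤ, (x₁ : ℝ) ∈ Set.Icc (-k) k → (x₂ : ℝ) ∈ Set.Icc (-k) k → x₁ ≠ x₂ →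
      c * k / (c + 2 * k) ≤
        |(-c * (x₁ : ℝ) + c ^ 2 / 2 * Real.log ((c + k + (x₁ : ℝ)) / (c + k - (x₁ : ℝ)))) -
          (-c * (x₂ : ℝ) + c ^ 2 / 2 *
            Real.log ((c + k + (x₂ : ℝ)) / (c + k - (x₂ : ℝ))))|) := by
  have key := fair_key c k hc hk
  have hck : 0 < c + 2 * k := by linarith
  have hr : 0 < c * k / (c + 2 * k) := by positivity
  refine ⟨?_, key, ?_⟩
  · intro a ha b hb hab
    have := key b a hb ha hab
    have hpos : 0 < (b - a) * c * k / (c + 2 * k) := by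
      have : 0 < b - a := by linarith
      positivity
    dsimp only
    linarith
  · intro x₁ x₂ h₁ h₂ hne
    set f : ℝ → ℝ := fun x => -c * x + c ^ 2 / 2 * Real.log ((c + k + x) / (c + k - x))
      with hf
    rcases lt_or_gt_of_ne hne with h | h
    · -- x₁ < x₂
      have hge1 : (1:ℝ) ≤ (x₂:ℝ) - (x₁:ℝ) := by
        have := Int.add_one_le_iff.mpr h
        have : (x₁:ℝ) + 1 ≤ (x₂:ℝ) := by exact_mod_cast this
        linarith
      have := key (x₂:ℝ) (x₁:ℝ) h₂ h₁ (by exact_mod_cast h)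
      have hstep : c * k / (c + 2 * k) ≤ ((x₂:ℝ) - x₁) * c * k / (c + 2 * k) := by
        rw [div_le_div_iff₀ hck hck]
        have h0 : (0:ℝ) < c * k * (c + 2 * k) := by positivity
        nlinarith [mul_nonneg (sub_nonneg.mpr hge1) h0.le]
      have hle : c * k / (c + 2 * k) ≤ f (x₁:ℝ) - f (x₂:ℝ) := by
        simp only [hf] at this ⊢; linarith
      calc c * k / (c + 2 * k) ≤ f (x₁:ℝ) - f (x₂:ℝ) := hle
        _ ≤ |f (x₁:ℝ) - f (x₂:ℝ)| := le_abs_self _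
    · -- x₂ < x₁
      have hge1 : (1:ℝ) ≤ (x₁:ℝ) - (x₂:ℝ) := by
        have := Int.add_one_le_iff.mpr h
        have : (x₂:ℝ) + 1 ≤ (x₁:ℝ) := by exact_mod_cast this
        linarith
      have := key (x₁:ℝ) (x₂:ℝ) h₁ h₂ (by exact_mod_cast h)
      have hstep : c * k / (c + 2 * k) ≤ ((x₁:ℝ) - x₂) * c * k / (c + 2 * k) := by
        rw [div_le_div_iff₀ hck hck]
        have h0 : (0:ℝ) < c * k * (c + 2 * k) := by positivity
        nlinarith [mul_nonneg (sub_nonneg.mpr hge1) h0.le]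
      have hle : c * k / (c + 2 * k) ≤ f (x₂:ℝ) - f (x₁:ℝ) := by
        simp only [hf] at this ⊢; linarith
      calc c * k / (c + 2 * k) ≤ f (x₂:ℝ) - f (x₁:ℝ) := hle
        _ ≤ |f (x₁:ℝ) - f (x₂:ℝ)| := by rw [abs_sub_comm]; exact le_abs_self _
end
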